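/- arXiv:2110.14724 — 2 statements merged into one kernel-verified Lean document; each statement's English description precedes it below -/
import Mathlib

section
/- In a finite concurrent reachability game, if a set of states Bd ⊆ Q consists only of sub-maximizable states (Bd ⊆ SubMaxQ_A), then every state outside the secure set w.r.t. Bd is sub-maximizable as well: Q ∖ Sec(Bd) ⊆ SubMaxQ_A. -/
open scoped BigOperators Classical

noncomputable section

/-- A probability distribution on a finite type. -/
def FDist (X : Type) [Fintype X] : Type :=
  { p : X → ℝ // (∀ x, 0 ≤ p x) ∧ ∑ x, p x = 1 }

namespace CRG

variable {A B Q D : Type} [Fintype A] [Fintype B] [Fintype Q] [Fintype D]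

/-- The support of a distribution. -/
def supp {X : Type} [Fintype X] (σ : FDist X) : Set X := { x | σ.1 x ≠ 0 }

/-- The Dirac distribution. -/
def dirac {X : Type} [Fintype X] [DecidableEq X] (x : X) : FDist X :=
  ⟨fun y => if y = x then 1 else 0, by
    constructor
    · intro y
      dsimp only
      split <;> norm_num
    · simp⟩

/-- Outcome of a pair of mixed strategies in the game in normal form with payoff `u`. -/
def out (u : A → B → ℝ) (σA : FDist A) (σB : FDist B) : ℝ :=
  ∑ a, ∑ b, σA.1 a * σB.1 b * u a b

/-- Outcome of a mixed strategy of Player A against a pure action of Player B. -/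
def outB (u : A → B → ℝ) (σA : FDist A) (b : B) : ℝ :=
  ∑ a, σA.1 a * u a b

/-- The value of a Player A mixed strategy in a game in normal form. -/
def valStratGF (u : A → B → ℝ) (σA : FDist A) : ℝ :=
  ⨅ σB : FDist B, out u σA σB

/-- The (von Neumann) value of a finite game in normal form. -/
def valGF (u : A → B → ℝ) : ℝ :=
  ⨆ σA : FDist A, valStratGF u σA

/-- The optimal Player A mixed strategies in a game in normal form. -/
def OptA (u : A → B → ℝ) : Set (FDist A) := { σA | valStratGF u σA = valGF u }

/-- The optimal actions of Player B against the Player A mixed strategy `σA`. -/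
def optActs (u : A → B → ℝ) (σA : FDist A) : Set B :=
  { b | outB u σA b = valStratGF u σA }

/-- μ_v : the lift of a valuation of the states to the Nature states. -/
def lift (dist : D → FDist Q) (v : Q → ℝ) (d : D) : ℝ := ∑ q, (dist d).1 q * v q

/-- The payoff function of the local interaction `F_q` valued by `μ_m`. -/
def locPay (δ : Q → A → B → D) (dist : D → FDist Q) (m : Q → ℝ) (q : Q) : A → B → ℝ :=
  fun a b => lift dist m (δ q a b)

/-- One-step transition probability between states. -/
def step (δ : Q → A → B → D) (dist : D → FDist Q) (σA : FDist A) (σB : FDist B)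
    (q q' : Q) : ℝ :=
  ∑ a, ∑ b, σA.1 a * σB.1 b * (dist (δ q a b)).1 q'

/-- The operator Δ on valuations of the states. -/
def Δop (δ : Q → A → B → D) (dist : D → FDist Q) (T : Q) (v : Q → ℝ) : Q → ℝ :=
  fun q => if q = T then 1 else valGF (fun a b => lift dist v (δ q a b))

/-- The target `T` is an absorbing (self-looping) sink. -/
def Absorbing (δ : Q → A → B → D) (dist : D → FDist Q) (T : Q) : Prop :=
  ∀ a b, (dist (δ T a b)).1 = fun q => if q = T then 1 else 0

/-- `m` is the least fixed point of Δ on `[0,1]^Q`. -/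
def IsLfpDelta (δ : Q → A → B → D) (dist : D → FDist Q) (T : Q) (m : Q → ℝ) : Prop :=
  (∀ q, m q ∈ Set.Icc (0:ℝ) 1) ∧ Δop δ dist T m = m ∧
    ∀ v : Q → ℝ, (∀ q, v q ∈ Set.Icc (0:ℝ) 1) → Δop δ dist T v = v → ∀ q, m q ≤ v q

/-- A strategy: a history of past states together with the current state gives a
mixed action.  (This encodes maps `Q⁺ → 𝒟(X)`.) -/
def Strat (Q X : Type) [Fintype X] : Type := List Q → Q → FDist X

/-- Residual strategy after the history `π` has been played. -/
def residual {X : Type} [Fintype X] (s : Strat Q X) (π : List Q) : Strat Q X :=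
  fun h q => s (π ++ h) q

/-- The (positional) strategy associated with a per-state choice of mixed actions. -/
def ofPos {X : Type} [Fintype X] (s : Q → FDist X) : Strat Q X := fun _ q => s q

/-- Probability of reaching the set `S` within `n` steps from current state `q`,
history `h` having been played. -/
def reachSetNAux (δ : Q → A → B → D) (dist : D → FDist Q) (S : Set Q) :
    ℕ → Strat Q A → Strat Q B → List Q → Q → ℝ
  | 0, _, _, _, q => if q ∈ S then 1 else 0
  | n + 1, sA, sB, h, q =>
      if q ∈ S then 1
      else ∑ q', step δ dist (sA h q) (sB h q) q q' *
        reachSetNAux δ dist S n sA sB (h ++ [q]) q'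

/-- Probability of reaching the set `S` within `n` steps from state `q`. -/
def reachSetN (δ : Q → A → B → D) (dist : D → FDist Q) (S : Set Q) (n : ℕ)
    (sA : Strat Q A) (sB : Strat Q B) (q : Q) : ℝ :=
  reachSetNAux δ dist S n sA sB [] q

/-- Probability of reaching the target `T` within `n` steps from state `q`. -/
def reachN (δ : Q → A → B → D) (dist : D → FDist Q) (T : Q) (n : ℕ)
    (sA : Strat Q A) (sB : Strat Q B) (q : Q) : ℝ :=
  reachSetN δ dist {T} n sA sB q

/-- Probability of eventually reaching the target `T` from state `q`. -/
def reach (δ : Q → A → B → D) (dist : D → FDist Q) (T : Q)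
    (sA : Strat Q A) (sB : Strat Q B) (q : Q) : ℝ :=
  ⨆ n : ℕ, reachN δ dist T n sA sB q

/-- The value of a Player A strategy from state `q`. -/
def valA (δ : Q → A → B → D) (dist : D → FDist Q) (T : Q) (sA : Strat Q A) (q : Q) : ℝ :=
  ⨅ sB : Strat Q B, reach δ dist T sA sB q

/-- The value of the game from state `q`. -/
def value (δ : Q → A → B → D) (dist : D → FDist Q) (T : Q) (q : Q) : ℝ :=
  ⨆ sA : Strat Q A, valA δ dist T sA q

/-- A state is maximizable when Player A has an optimal strategy from it. -/
def Maximizable (δ : Q → A → B → D) (dist : D → FDist Q) (T q : Q) : Prop :=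
  ∃ sA : Strat Q A, valA δ dist T sA q = value δ dist T q

/-- A positional Player A strategy locally dominates the valuation `v`. -/
def LocallyDominates (δ : Q → A → B → D) (dist : D → FDist Q)
    (sA : Q → FDist A) (v : Q → ℝ) : Prop :=
  ∀ q, v q ≤ valStratGF (fun a b => lift dist v (δ q a b)) (sA q)

/-- Transition function ι of the MDP induced by a positional Player A strategy. -/
def stepB [DecidableEq B] (δ : Q → A → B → D) (dist : D → FDist Q)
    (sA : Q → FDist A) (q : Q) (b : B) (q' : Q) : ℝ :=
  step δ dist (sA q) (dirac b) q q'

/-- An end component of the MDP induced by the positional Player A strategy `sA`. -/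
structure EndComp [DecidableEq B] (δ : Q → A → B → D) (dist : D → FDist Q)
    (sA : Q → FDist A) where
  states : Set Q
  acts : Q → Set B
  acts_nonempty : ∀ q ∈ states, (acts q).Nonempty
  closed : ∀ q ∈ states, ∀ b ∈ acts q, ∀ q', stepB δ dist sA q b q' ≠ 0 → q' ∈ states
  connected : ∀ q ∈ states, ∀ q' ∈ states,
    Relation.ReflTransGen
      (fun x y => x ∈ states ∧ ∃ b ∈ acts x, stepB δ dist sA x b y ≠ 0) q q'

/-- `S_D` : the Nature states having a non-zero probability to reach `S`. -/
def natS (dist : D → FDist Q) (S : Set Q) : Set D :=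
  { d | ∃ q ∈ S, (dist d).1 q ≠ 0 }

/-- Progressive optimal local strategies at `q` w.r.t. the set `Gd`. -/
def Prog (δ : Q → A → B → D) (dist : D → FDist Q) (m : Q → ℝ) (q : Q)
    (Gd : Set Q) : Set (FDist A) :=
  { σA | σA ∈ OptA (locPay δ dist m q) ∧
      ∀ b ∈ optActs (locPay δ dist m q) σA, ∃ a ∈ supp σA, δ q a b ∈ natS dist Gd }

/-- Risky optimal local strategies at `q` w.r.t. the set `Bd`. -/
def Risk (δ : Q → A → B → D) (dist : D → FDist Q) (m : Q → ℝ) (q : Q)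
    (Bd : Set Q) : Set (FDist A) :=
  { σA | σA ∈ OptA (locPay δ dist m q) ∧
      ∃ b ∈ optActs (locPay δ dist m q) σA, ∃ a ∈ supp σA, δ q a b ∈ natS dist Bd }

/-- Efficient local strategies: progressive and not risky. -/
def Eff (δ : Q → A → B → D) (dist : D → FDist Q) (m : Q → ℝ) (q : Q)
    (Gd Bd : Set Q) : Set (FDist A) :=
  Prog δ dist m q Gd \ Risk δ dist m q Bd

/-- The increasing sequence of sets of secure states w.r.t. `Bd`. -/
def SecN (δ : Q → A → B → D) (dist : D → FDist Q) (m : Q → ℝ) (T : Q) (Bd : Set Q) :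
    ℕ → Set Q
  | 0 => {T}
  | n + 1 => SecN δ dist m T Bd n ∪
      { q | q ∉ Bd ∧ (Eff δ dist m q (SecN δ dist m T Bd n) Bd).Nonempty }

/-- The set of secure states w.r.t. `Bd`. -/
def Sec (δ : Q → A → B → D) (dist : D → FDist Q) (m : Q → ℝ) (T : Q) (Bd : Set Q) :
    Set Q :=
  (⋃ n : ℕ, SecN δ dist m T Bd n) ∪ { q | m q = 0 }

/-- The sequence of sets of bad states. -/
def BadN (δ : Q → A → B → D) (dist : D → FDist Q) (m : Q → ℝ) (T : Q) : ℕ → Set Q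
  | 0 => ∅
  | n + 1 => (Sec δ dist m T (BadN δ dist m T n))ᶜ

/-- The set of bad states. -/
def Bad (δ : Q → A → B → D) (dist : D → FDist Q) (m : Q → ℝ) (T : Q) : Set Q :=
  BadN δ dist m T (Fintype.card Q)

/-- `α[y]` : the total valuation extending the partial valuation `α : O∖E → [0,1]`
with the value `y` on `E`. -/
def extendVal {O : Type} (E : Set O) (α : O → ℝ) (y : ℝ) : O → ℝ :=
  fun o => if o ∈ E then y else α o

/-- The map `f_α : y ↦ val_{⟨F, α[y]⟩}`. -/
def fval {O : Type} (ρ : A → B → O) (E : Set O) (α : O → ℝ) (y : ℝ) : ℝ :=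
  valGF (fun a b => extendVal E α y (ρ a b))

/-- `v` is the least fixed point of `f_α` on `[0,1]`. -/
def IsLfpVal {O : Type} (ρ : A → B → O) (E : Set O) (α : O → ℝ) (v : ℝ) : Prop :=
  v ∈ Set.Icc (0:ℝ) 1 ∧ fval ρ E α v = v ∧
    ∀ y ∈ Set.Icc (0:ℝ) 1, fval ρ E α y = y → v ≤ y

/-- The game form `ρ` is reach-maximizable w.r.t. the partial valuation `α : O∖E → [0,1]`. -/
def RMwrt {O : Type} (ρ : A → B → O) (E : Set O) (α : O → ℝ) : Prop :=
  ∀ v : ℝ, IsLfpVal ρ E α v →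
    v = 0 ∨
      ∃ σA ∈ OptA (fun a b => extendVal E α v (ρ a b)),
        ∀ b ∈ optActs (fun a b => extendVal E α v (ρ a b)) σA,
          ∃ a ∈ supp σA, ρ a b ∉ E

/-- A reach-maximizable game form: RM w.r.t. every partial valuation of its outcomes. -/
def RMform {O : Type} (ρ : A → B → O) : Prop :=
  ∀ (E : Set O) (α : O → ℝ), (∀ o ∉ E, α o ∈ Set.Icc (0:ℝ) 1) → RMwrt ρ E α

/-- A determined game form. -/
def Determined {O : Type} (ρ : A → B → O) : Prop :=
  ∀ E : Set O, (∃ a, ∀ b, ρ a b ∈ E) ∨ (∃ b, ∀ a, ρ a b ∉ E)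

/-- Transition function of the three-state reachability game `C_{(F,α)}`:
state `0` is `q₀`, state `1` is the target `⊤`, state `2` is the bin `⊥`. -/
def triδ {O : Type} (ρ : A → B → O) (E : Set O) :
    Fin 3 → A → B → (Fin 3 ⊕ {o : O // o ∉ E}) :=
  fun s a b =>
    if s = 0 then
      if h : ρ a b ∈ E then Sum.inl 0 else Sum.inr ⟨ρ a b, h⟩
    else Sum.inl s

/-- Nature distributions of the three-state reachability game `C_{(F,α)}`. -/
def triDist {O : Type} (E : Set O) (α : O → ℝ)
    (hα : ∀ o ∉ E, α o ∈ Set.Icc (0:ℝ) 1) :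
    (Fin 3 ⊕ {o : O // o ∉ E}) → FDist (Fin 3) := fun d =>
  match d with
  | Sum.inl t => dirac t
  | Sum.inr x =>
      ⟨![0, α x.1, 1 - α x.1], by
        obtain ⟨h0, h1⟩ := hα x.1 x.2
        constructor
        · intro s
          fin_cases s <;> simp <;> linarith
        · simp [Fin.sum_univ_three]⟩

/-- An abstract (finite) game form with actions `A` and `B`. -/
structure GameForm (A B : Type) where
  O : Type
  fin : Fintype O
  ρ : A → B → O

/-- All local interactions of the arena `δ` belong to the set `𝒢` of game forms
(up to a renaming of the outcomes into Nature states). -/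
def UsesForms {Q D : Type} (𝒢 : Set (GameForm A B)) (δ : Q → A → B → D) : Prop :=
  ∀ q, ∃ F ∈ 𝒢, ∃ g : F.O → D, δ q = fun a b => g (F.ρ a b)

/-- The sequence of iterates of Δ starting from the valuation `1_{⊤}`. -/
def vseq (δ : Q → A → B → D) (dist : D → FDist Q) (T : Q) : ℕ → Q → ℝ
  | 0 => fun q => if q = T then 1 else 0
  | n + 1 => Δop δ dist T (vseq δ dist T n)

/-- Relevant paths w.r.t. the strategy `sA` from the state `q₀`: the pair `(h, q)`
encodes the path `h · q` (history `h`, current state `q`). -/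
inductive Relevant [DecidableEq B] (δ : Q → A → B → D) (dist : D → FDist Q)
    (m : Q → ℝ) (sA : Strat Q A) (q₀ : Q) : List Q → Q → Prop
  | base : Relevant δ dist m sA q₀ [] q₀
  | step {h : List Q} {q q' : Q} :
      Relevant δ dist m sA q₀ h q →
      (∃ b ∈ optActs (locPay δ dist m q) (sA h q),
        0 < CRG.step δ dist (sA h q) (dirac b) q q') →
      Relevant δ dist m sA q₀ (h ++ [q]) q'

end CRG

namespace CRGProof
open CRG
set_option linter.unusedSectionVars false

variable {A B Q D : Type} [Fintype A] [Fintype B] [Fintype Q] [Fintype D]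
variable [Nonempty A] [Nonempty B] [Nonempty Q] [Nonempty D]

theorem FDist.nonneg {X : Type} [Fintype X] (σ : FDist X) (x : X) : 0 ≤ σ.1 x := σ.2.1 x

theorem FDist.sum_eq {X : Type} [Fintype X] (σ : FDist X) : ∑ x, σ.1 x = 1 := σ.2.2

theorem FDist.le_one {X : Type} [Fintype X] (σ : FDist X) (x : X) : σ.1 x ≤ 1 := by
  have := Finset.single_le_sum (f := σ.1) (fun i _ => σ.2.1 i) (Finset.mem_univ x)
  simpa [σ.2.2] using this

instance instNonemptyFDist {X : Type} [Fintype X] [Nonempty X] : Nonempty (FDist X) :=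
  ⟨dirac (Classical.arbitrary X)⟩

instance instNonemptyStrat {X : Type} [Fintype X] [Nonempty X] : Nonempty (Strat Q X) :=
  ⟨fun _ _ => Classical.arbitrary _⟩

/-- A uniform bound for the payoffs. -/
def Cb (u : A → B → ℝ) : ℝ := ∑ a, ∑ b, |u a b|

theorem abs_out_le (u : A → B → ℝ) (σA : FDist A) (σB : FDist B) :
    |out u σA σB| ≤ Cb u := by
  refine (Finset.abs_sum_le_sum_abs _ _).trans ?_
  refine Finset.sum_le_sum fun a _ => ?_
  refine (Finset.abs_sum_le_sum_abs _ _).trans ?_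
  refine Finset.sum_le_sum fun b _ => ?_
  rw [abs_mul, abs_mul, abs_of_nonneg (FDist.nonneg σA a), abs_of_nonneg (FDist.nonneg σB b)]
  have h1 : σA.1 a * σB.1 b ≤ 1 :=
    mul_le_one₀ (FDist.le_one σA a) (FDist.nonneg σB b) (FDist.le_one σB b)
  nlinarith [abs_nonneg (u a b), mul_nonneg (FDist.nonneg σA a) (FDist.nonneg σB b)]

theorem bddBelow_out (u : A → B → ℝ) (σA : FDist A) :
    BddBelow (Set.range (out u σA)) := by
  refine ⟨-Cb u, ?_⟩
  rintro y ⟨σB, rfl⟩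
  exact neg_le_of_abs_le (abs_out_le u σA σB)

theorem valStratGF_le_out (u : A → B → ℝ) (σA : FDist A) (σB : FDist B) :
    valStratGF u σA ≤ out u σA σB :=
  ciInf_le (bddBelow_out u σA) σB

theorem le_valStratGF {u : A → B → ℝ} {σA : FDist A} {c : ℝ}
    (h : ∀ σB, c ≤ out u σA σB) : c ≤ valStratGF u σA :=
  le_ciInf h

theorem out_dirac (u : A → B → ℝ) (σA : FDist A) (b : B) :
    out u σA (dirac b) = outB u σA b := by
  unfold out outB dirac
  simp only
  refine Finset.sum_congr rfl fun a _ => ?_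
  rw [Finset.sum_eq_single b]
  · simp
  · intro b' _ hb'
    simp [hb']
  · simp

theorem valStratGF_le_outB (u : A → B → ℝ) (σA : FDist A) (b : B) :
    valStratGF u σA ≤ outB u σA b :=
  (valStratGF_le_out u σA (dirac b)).trans_eq (out_dirac u σA b)

theorem out_eq_sum_outB (u : A → B → ℝ) (σA : FDist A) (σB : FDist B) :
    out u σA σB = ∑ b, σB.1 b * outB u σA b := by
  unfold out outB
  rw [Finset.sum_comm]
  refine Finset.sum_congr rfl fun b _ => ?_
  rw [Finset.mul_sum]
  refine Finset.sum_congr rfl fun a _ => ?_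
  ring

theorem exists_optAct (u : A → B → ℝ) (σA : FDist A) :
    ∃ b, b ∈ optActs u σA := by
  obtain ⟨b₀, -, hb₀⟩ := Finset.exists_min_image Finset.univ (outB u σA)
    ⟨Classical.arbitrary B, Finset.mem_univ _⟩
  refine ⟨b₀, ?_⟩
  have hge : outB u σA b₀ ≤ valStratGF u σA := by
    refine le_valStratGF fun σB => ?_
    rw [out_eq_sum_outB]
    calc outB u σA b₀ = ∑ b, σB.1 b * outB u σA b₀ := by
          rw [← Finset.sum_mul, FDist.sum_eq, one_mul]
      _ ≤ ∑ b, σB.1 b * outB u σA b := by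
          exact Finset.sum_le_sum fun b hb =>
            mul_le_mul_of_nonneg_left (hb₀ b (Finset.mem_univ b)) (FDist.nonneg σB b)
  exact le_antisymm hge (valStratGF_le_outB u σA b₀)

theorem bddAbove_valStratGF (u : A → B → ℝ) :
    BddAbove (Set.range (valStratGF u)) := by
  refine ⟨Cb u, ?_⟩
  rintro y ⟨σA, rfl⟩
  exact (valStratGF_le_out u σA (Classical.arbitrary _)).trans
    (le_of_abs_le (abs_out_le u σA _))

theorem valStratGF_le_valGF (u : A → B → ℝ) (σA : FDist A) :
    valStratGF u σA ≤ valGF u :=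
  le_ciSup (bddAbove_valStratGF u) σA

theorem valGF_le {u : A → B → ℝ} {c : ℝ} (h : ∀ σA, valStratGF u σA ≤ c) :
    valGF u ≤ c :=
  ciSup_le h

theorem out_mono {u u' : A → B → ℝ} (h : ∀ a b, u a b ≤ u' a b)
    (σA : FDist A) (σB : FDist B) : out u σA σB ≤ out u' σA σB := by
  refine Finset.sum_le_sum fun a _ => Finset.sum_le_sum fun b _ => ?_
  exact mul_le_mul_of_nonneg_left (h a b)
    (mul_nonneg (FDist.nonneg σA a) (FDist.nonneg σB b))

theorem valStratGF_mono {u u' : A → B → ℝ} (h : ∀ a b, u a b ≤ u' a b) (σA : FDist A) :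
    valStratGF u σA ≤ valStratGF u' σA :=
  le_ciInf fun σB => (valStratGF_le_out u σA σB).trans (out_mono h σA σB)

theorem valGF_mono {u u' : A → B → ℝ} (h : ∀ a b, u a b ≤ u' a b) :
    valGF u ≤ valGF u' :=
  ciSup_le fun σA => (valStratGF_mono h σA).trans (valStratGF_le_valGF u' σA)

/-! ### lift and step lemmas -/

theorem lift_nonneg {dist : D → FDist Q} {v : Q → ℝ} (hv : ∀ q, 0 ≤ v q) (d : D) :
    0 ≤ lift dist v d :=
  Finset.sum_nonneg fun q _ => mul_nonneg (FDist.nonneg _ q) (hv q)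

theorem lift_le_one {dist : D → FDist Q} {v : Q → ℝ} (hv : ∀ q, v q ≤ 1) (d : D) :
    lift dist v d ≤ 1 := by
  calc ∑ q, (dist d).1 q * v q ≤ ∑ q, (dist d).1 q :=
        Finset.sum_le_sum fun q _ => mul_le_of_le_one_right (FDist.nonneg _ q) (hv q)
    _ = 1 := FDist.sum_eq _

theorem lift_mono {dist : D → FDist Q} {v w : Q → ℝ} (h : ∀ q, v q ≤ w q) (d : D) :
    lift dist v d ≤ lift dist w d :=
  Finset.sum_le_sum fun q _ => mul_le_mul_of_nonneg_left (h q) (FDist.nonneg _ q)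

theorem step_nonneg (δ : Q → A → B → D) (dist : D → FDist Q) (σA : FDist A)
    (σB : FDist B) (q q' : Q) : 0 ≤ step δ dist σA σB q q' :=
  Finset.sum_nonneg fun a _ => Finset.sum_nonneg fun b _ =>
    mul_nonneg (mul_nonneg (FDist.nonneg _ a) (FDist.nonneg _ b)) (FDist.nonneg _ q')

theorem step_sum (δ : Q → A → B → D) (dist : D → FDist Q) (σA : FDist A)
    (σB : FDist B) (q : Q) : ∑ q', step δ dist σA σB q q' = 1 := by
  unfold step
  rw [Finset.sum_comm]
  have h : ∀ a, ∑ q', ∑ b, σA.1 a * σB.1 b * (dist (δ q a b)).1 q' = σA.1 a := by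
    intro a
    rw [Finset.sum_comm]
    calc ∑ b, ∑ q', σA.1 a * σB.1 b * (dist (δ q a b)).1 q'
        = ∑ b, σA.1 a * σB.1 b := by
          refine Finset.sum_congr rfl fun b _ => ?_
          rw [← Finset.mul_sum, FDist.sum_eq, mul_one]
      _ = σA.1 a := by rw [← Finset.mul_sum, FDist.sum_eq, mul_one]
  rw [Finset.sum_congr rfl fun a _ => h a, FDist.sum_eq]

theorem step_out (δ : Q → A → B → D) (dist : D → FDist Q) (v : Q → ℝ)
    (σA : FDist A) (σB : FDist B) (q : Q) :
    ∑ q', step δ dist σA σB q q' * v q' = out (locPay δ dist v q) σA σB := by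
  calc ∑ q', step δ dist σA σB q q' * v q'
      = ∑ q', ∑ a, ∑ b, σA.1 a * σB.1 b * ((dist (δ q a b)).1 q' * v q') := by
        refine Finset.sum_congr rfl fun q' _ => ?_
        unfold step
        rw [Finset.sum_mul]
        refine Finset.sum_congr rfl fun a _ => ?_
        rw [Finset.sum_mul]
        refine Finset.sum_congr rfl fun b _ => ?_
        ring
    _ = ∑ a, ∑ b, σA.1 a * σB.1 b * lift dist v (δ q a b) := by
        rw [Finset.sum_comm]
        refine Finset.sum_congr rfl fun a _ => ?_
        rw [Finset.sum_comm]
        refine Finset.sum_congr rfl fun b _ => ?_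
        unfold lift
        rw [← Finset.mul_sum]
    _ = _ := rfl

theorem step_dirac (δ : Q → A → B → D) (dist : D → FDist Q) (σA : FDist A)
    (b : B) (q q' : Q) :
    step δ dist σA (dirac b) q q' = ∑ a, σA.1 a * (dist (δ q a b)).1 q' := by
  unfold step dirac
  refine Finset.sum_congr rfl fun a _ => ?_
  rw [Finset.sum_eq_single b]
  · simp
  · intro b' _ hb'
    simp [hb']
  · simp

theorem step_outB (δ : Q → A → B → D) (dist : D → FDist Q) (v : Q → ℝ)
    (σA : FDist A) (b : B) (q : Q) :
    ∑ q', step δ dist σA (dirac b) q q' * v q' = outB (locPay δ dist v q) σA b := by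
  rw [step_out, out_dirac]

/-! ### reachSetNAux lemmas -/

theorem aux_nonneg (δ : Q → A → B → D) (dist : D → FDist Q) (S : Set Q) :
    ∀ (n : ℕ) (sA : Strat Q A) (sB : Strat Q B) (h : List Q) (q : Q),
      0 ≤ reachSetNAux δ dist S n sA sB h q := by
  intro n
  induction n with
  | zero =>
    intro sA sB h q
    unfold reachSetNAux
    split <;> norm_num
  | succ n ih =>
    intro sA sB h q
    unfold reachSetNAux
    split
    · norm_num
    · exact Finset.sum_nonneg fun q' _ =>
        mul_nonneg (step_nonneg _ _ _ _ _ _) (ih _ _ _ _)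

theorem aux_le_one (δ : Q → A → B → D) (dist : D → FDist Q) (S : Set Q) :
    ∀ (n : ℕ) (sA : Strat Q A) (sB : Strat Q B) (h : List Q) (q : Q),
      reachSetNAux δ dist S n sA sB h q ≤ 1 := by
  intro n
  induction n with
  | zero =>
    intro sA sB h q
    unfold reachSetNAux
    split <;> norm_num
  | succ n ih =>
    intro sA sB h q
    unfold reachSetNAux
    split
    · norm_num
    · calc ∑ q', step δ dist (sA h q) (sB h q) q q' *
            reachSetNAux δ dist S n sA sB (h ++ [q]) q'
          ≤ ∑ q', step δ dist (sA h q) (sB h q) q q' := by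
            refine Finset.sum_le_sum fun q' _ => ?_
            exact mul_le_of_le_one_right (step_nonneg _ _ _ _ _ _) (ih _ _ _ _)
        _ = 1 := step_sum _ _ _ _ _

theorem aux_mono (δ : Q → A → B → D) (dist : D → FDist Q) (S : Set Q) :
    ∀ (n : ℕ) (sA : Strat Q A) (sB : Strat Q B) (h : List Q) (q : Q),
      reachSetNAux δ dist S n sA sB h q ≤ reachSetNAux δ dist S (n + 1) sA sB h q := by
  intro n
  induction n with
  | zero =>
    intro sA sB h q
    unfold reachSetNAux
    split
    · norm_num
    · exact Finset.sum_nonneg fun q' _ => mul_nonneg (step_nonneg _ _ _ _ _ _)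
        (aux_nonneg _ _ _ _ _ _ _ _)
  | succ n ih =>
    intro sA sB h q
    conv_lhs => unfold reachSetNAux
    conv_rhs => unfold reachSetNAux
    split
    · exact le_refl _
    · refine Finset.sum_le_sum fun q' _ => ?_
      exact mul_le_mul_of_nonneg_left (ih _ _ _ _) (step_nonneg _ _ _ _ _ _)

theorem aux_monotone (δ : Q → A → B → D) (dist : D → FDist Q) (S : Set Q)
    (sA : Strat Q A) (sB : Strat Q B) (h : List Q) (q : Q) :
    Monotone fun n => reachSetNAux δ dist S n sA sB h q :=
  monotone_nat_of_le_succ fun n => aux_mono δ dist S n sA sB h q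

theorem aux_shift (δ : Q → A → B → D) (dist : D → FDist Q) (S : Set Q) :
    ∀ (n : ℕ) (sA : Strat Q A) (sB : Strat Q B) (H h : List Q) (q : Q),
      reachSetNAux δ dist S n sA sB (H ++ h) q =
        reachSetNAux δ dist S n (residual sA H) (residual sB H) h q := by
  intro n
  induction n with
  | zero => intro _ _ _ _ _; rfl
  | succ n ih =>
    intro sA sB H h q
    conv_lhs => unfold reachSetNAux
    conv_rhs => unfold reachSetNAux
    split
    · rfl
    · refine Finset.sum_congr rfl fun q' _ => ?_
      have hres : sA (H ++ h) q = residual sA H h q := rfl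
      have hres' : sB (H ++ h) q = residual sB H h q := rfl
      rw [hres, hres', List.append_assoc, ih]

theorem aux_congr (δ : Q → A → B → D) (dist : D → FDist Q) (S : Set Q) :
    ∀ (n : ℕ) (sA sA' : Strat Q A) (sB sB' : Strat Q B) (h : List Q) (q : Q),
      sA h q = sA' h q → sB h q = sB' h q →
      (∀ h₂ q₂, (h ++ [q]) <+: h₂ → sA h₂ q₂ = sA' h₂ q₂ ∧ sB h₂ q₂ = sB' h₂ q₂) →
      reachSetNAux δ dist S n sA sB h q = reachSetNAux δ dist S n sA' sB' h q := by
  intro n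
  induction n with
  | zero => intro _ _ _ _ _ _ _ _ _; rfl
  | succ n ih =>
    intro sA sA' sB sB' h q hA hB hext
    conv_lhs => unfold reachSetNAux
    conv_rhs => unfold reachSetNAux
    split
    · rfl
    · refine Finset.sum_congr rfl fun q' _ => ?_
      rw [hA, hB]
      congr 1
      refine ih _ _ _ _ _ _ ?_ ?_ ?_
      · exact (hext _ _ (List.prefix_refl _)).1
      · exact (hext _ _ (List.prefix_refl _)).2
      · intro h₂ q₂ hpre
        refine hext _ _ ?_
        exact (List.prefix_append _ _).trans hpre

/-! ### suprema plumbing -/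

theorem ciSup_add_ciSup_mono {f g : ℕ → ℝ} (hf : Monotone f) (hg : Monotone g)
    (bf : BddAbove (Set.range f)) (bg : BddAbove (Set.range g)) :
    (⨆ n, (f n + g n)) = (⨆ n, f n) + ⨆ n, g n := by
  have bfg : BddAbove (Set.range fun n => f n + g n) := by
    obtain ⟨Mf, hMf⟩ := bf; obtain ⟨Mg, hMg⟩ := bg
    refine ⟨Mf + Mg, ?_⟩; rintro y ⟨n, rfl⟩
    exact add_le_add (hMf ⟨n, rfl⟩) (hMg ⟨n, rfl⟩)
  apply le_antisymm
  · exact ciSup_le fun n => add_le_add (le_ciSup bf n) (le_ciSup bg n)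
  · have hS : ∀ n m, f n + g m ≤ ⨆ k, (f k + g k) := by
      intro n m
      calc f n + g m ≤ f (n ⊔ m) + g (n ⊔ m) :=
            add_le_add (hf le_sup_left) (hg le_sup_right)
        _ ≤ _ := le_ciSup bfg _
    have h1 : (⨆ n, f n) ≤ (⨆ k, (f k + g k)) - ⨆ n, g n := by
      refine ciSup_le fun n => ?_
      rw [le_sub_iff_add_le]
      have h2 : (⨆ m, g m) ≤ (⨆ k, (f k + g k)) - f n :=
        ciSup_le fun m => by rw [le_sub_iff_add_le, add_comm]; exact hS n m
      linarith
    linarith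

theorem bddAbove_sum {ι : Type} (s : Finset ι) (f : ι → ℕ → ℝ)
    (hb : ∀ i, BddAbove (Set.range (f i))) :
    BddAbove (Set.range fun n => ∑ i ∈ s, f i n) := by
  induction s using Finset.cons_induction with
  | empty => exact ⟨0, by rintro y ⟨n, rfl⟩; simp⟩
  | cons a s ha ih =>
    obtain ⟨M, hM⟩ := hb a
    obtain ⟨N, hN⟩ := ih
    refine ⟨M + N, ?_⟩
    rintro y ⟨n, rfl⟩
    simp only [Finset.sum_cons]
    exact add_le_add (hM ⟨n, rfl⟩) (hN ⟨n, rfl⟩)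

theorem ciSup_sum {ι : Type} (s : Finset ι) (f : ι → ℕ → ℝ)
    (hm : ∀ i, Monotone (f i)) (hb : ∀ i, BddAbove (Set.range (f i))) :
    (⨆ n, ∑ i ∈ s, f i n) = ∑ i ∈ s, ⨆ n, f i n := by
  induction s using Finset.cons_induction with
  | empty => simp [ciSup_const]
  | cons a s ha ih =>
    have hms : Monotone fun n => ∑ i ∈ s, f i n :=
      fun n m hnm => Finset.sum_le_sum fun i _ => hm i hnm
    calc (⨆ n, ∑ i ∈ Finset.cons a s ha, f i n)
        = ⨆ n, (f a n + ∑ i ∈ s, f i n) := iSup_congr fun n => Finset.sum_cons _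
      _ = (⨆ n, f a n) + ⨆ n, ∑ i ∈ s, f i n :=
          ciSup_add_ciSup_mono (hm a) hms (hb a) (bddAbove_sum s f hb)
      _ = _ := by rw [ih, Finset.sum_cons]

theorem ciSup_succ_eq {f : ℕ → ℝ} (hf : Monotone f) (hb : BddAbove (Set.range f)) :
    (⨆ n, f (n + 1)) = ⨆ n, f n := by
  have hb' : BddAbove (Set.range fun n => f (n + 1)) := by
    obtain ⟨M, hM⟩ := hb; exact ⟨M, by rintro y ⟨n, rfl⟩; exact hM ⟨n + 1, rfl⟩⟩
  apply le_antisymm (ciSup_le fun n => le_ciSup hb (n + 1))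
  exact ciSup_le fun n => (hf (Nat.le_succ n)).trans (le_ciSup hb' n)

/-! ### reach lemmas -/

theorem reachN_nonneg (δ : Q → A → B → D) (dist : D → FDist Q) (T : Q) (n : ℕ)
    (sA : Strat Q A) (sB : Strat Q B) (q : Q) : 0 ≤ reachN δ dist T n sA sB q :=
  aux_nonneg δ dist {T} n sA sB [] q

theorem reachN_le_one (δ : Q → A → B → D) (dist : D → FDist Q) (T : Q) (n : ℕ)
    (sA : Strat Q A) (sB : Strat Q B) (q : Q) : reachN δ dist T n sA sB q ≤ 1 :=
  aux_le_one δ dist {T} n sA sB [] q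

theorem reachN_monotone (δ : Q → A → B → D) (dist : D → FDist Q) (T : Q)
    (sA : Strat Q A) (sB : Strat Q B) (q : Q) :
    Monotone fun n => reachN δ dist T n sA sB q :=
  aux_monotone δ dist {T} sA sB [] q

theorem bddAbove_reachN (δ : Q → A → B → D) (dist : D → FDist Q) (T : Q)
    (sA : Strat Q A) (sB : Strat Q B) (q : Q) :
    BddAbove (Set.range fun n => reachN δ dist T n sA sB q) :=
  ⟨1, by rintro y ⟨n, rfl⟩; exact reachN_le_one δ dist T n sA sB q⟩

theorem reachN_le_reach (δ : Q → A → B → D) (dist : D → FDist Q) (T : Q) (n : ℕ)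
    (sA : Strat Q A) (sB : Strat Q B) (q : Q) :
    reachN δ dist T n sA sB q ≤ reach δ dist T sA sB q :=
  le_ciSup (bddAbove_reachN δ dist T sA sB q) n

theorem reach_le_one (δ : Q → A → B → D) (dist : D → FDist Q) (T : Q)
    (sA : Strat Q A) (sB : Strat Q B) (q : Q) : reach δ dist T sA sB q ≤ 1 :=
  ciSup_le fun n => reachN_le_one δ dist T n sA sB q

theorem reach_nonneg (δ : Q → A → B → D) (dist : D → FDist Q) (T : Q)
    (sA : Strat Q A) (sB : Strat Q B) (q : Q) : 0 ≤ reach δ dist T sA sB q :=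
  (reachN_nonneg δ dist T 0 sA sB q).trans (reachN_le_reach δ dist T 0 sA sB q)

theorem reachN_zero_T (δ : Q → A → B → D) (dist : D → FDist Q) (T : Q)
    (sA : Strat Q A) (sB : Strat Q B) : reachN δ dist T 0 sA sB T = 1 := by
  unfold reachN reachSetN reachSetNAux
  simp

theorem reach_T (δ : Q → A → B → D) (dist : D → FDist Q) (T : Q)
    (sA : Strat Q A) (sB : Strat Q B) : reach δ dist T sA sB T = 1 :=
  le_antisymm (reach_le_one δ dist T sA sB T)
    ((reachN_zero_T δ dist T sA sB).symm.trans_le (reachN_le_reach δ dist T 0 sA sB T))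

theorem reachN_succ (δ : Q → A → B → D) (dist : D → FDist Q) (T : Q) (n : ℕ)
    (sA : Strat Q A) (sB : Strat Q B) {q : Q} (hq : q ≠ T) :
    reachN δ dist T (n + 1) sA sB q = ∑ q', step δ dist (sA [] q) (sB [] q) q q' *
      reachN δ dist T n (residual sA [q]) (residual sB [q]) q' := by
  unfold reachN reachSetN
  conv_lhs => unfold reachSetNAux
  rw [if_neg (by simpa using hq)]
  refine Finset.sum_congr rfl fun q' _ => ?_
  congr 1
  have h1 : ([] : List Q) ++ [q] = [q] ++ ([] : List Q) := by simp
  rw [h1, aux_shift]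

theorem reach_rec (δ : Q → A → B → D) (dist : D → FDist Q) (T : Q)
    (sA : Strat Q A) (sB : Strat Q B) {q : Q} (hq : q ≠ T) :
    reach δ dist T sA sB q = ∑ q', step δ dist (sA [] q) (sB [] q) q q' *
      reach δ dist T (residual sA [q]) (residual sB [q]) q' := by
  unfold reach
  rw [← ciSup_succ_eq (reachN_monotone δ dist T sA sB q) (bddAbove_reachN δ dist T sA sB q)]
  have h1 : (⨆ n, reachN δ dist T (n + 1) sA sB q) =
      ⨆ n, ∑ q', step δ dist (sA [] q) (sB [] q) q q' *
        reachN δ dist T n (residual sA [q]) (residual sB [q]) q' :=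
    iSup_congr fun n => reachN_succ δ dist T n sA sB hq
  have hmono : ∀ q' : Q, Monotone fun n => step δ dist (sA [] q) (sB [] q) q q' *
      reachN δ dist T n (residual sA [q]) (residual sB [q]) q' := by
    intro q' n n' hnn'
    exact mul_le_mul_of_nonneg_left (reachN_monotone δ dist T _ _ q' hnn')
      (step_nonneg _ _ _ _ _ _)
  have hbdd : ∀ q' : Q, BddAbove (Set.range fun n =>
      step δ dist (sA [] q) (sB [] q) q q' *
        reachN δ dist T n (residual sA [q]) (residual sB [q]) q') := by
    intro q'
    obtain ⟨M, hM⟩ := bddAbove_reachN δ dist T (residual sA [q]) (residual sB [q]) q'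
    refine ⟨step δ dist (sA [] q) (sB [] q) q q' * M, ?_⟩
    rintro y ⟨n, rfl⟩
    exact mul_le_mul_of_nonneg_left (hM ⟨n, rfl⟩) (step_nonneg _ _ _ _ _ _)
  rw [h1, ciSup_sum Finset.univ _ hmono hbdd]
  refine Finset.sum_congr rfl fun q' _ => ?_
  exact (Real.mul_iSup_of_nonneg (step_nonneg δ dist (sA [] q) (sB [] q) q q') _).symm

/-! ### valA / value basics -/

theorem bddBelow_reach (δ : Q → A → B → D) (dist : D → FDist Q) (T : Q)
    (sA : Strat Q A) (q : Q) :
    BddBelow (Set.range fun sB => reach δ dist T sA sB q) :=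
  ⟨0, by rintro y ⟨sB, rfl⟩; exact reach_nonneg δ dist T sA sB q⟩

theorem valA_le_reach (δ : Q → A → B → D) (dist : D → FDist Q) (T : Q)
    (sA : Strat Q A) (sB : Strat Q B) (q : Q) :
    valA δ dist T sA q ≤ reach δ dist T sA sB q :=
  ciInf_le (bddBelow_reach δ dist T sA q) sB

theorem le_valA {δ : Q → A → B → D} {dist : D → FDist Q} {T : Q}
    {sA : Strat Q A} {q : Q} {c : ℝ} (h : ∀ sB, c ≤ reach δ dist T sA sB q) :
    c ≤ valA δ dist T sA q :=
  le_ciInf h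

theorem valA_nonneg (δ : Q → A → B → D) (dist : D → FDist Q) (T : Q)
    (sA : Strat Q A) (q : Q) : 0 ≤ valA δ dist T sA q :=
  le_ciInf fun sB => reach_nonneg δ dist T sA sB q

theorem valA_le_one (δ : Q → A → B → D) (dist : D → FDist Q) (T : Q)
    (sA : Strat Q A) (q : Q) : valA δ dist T sA q ≤ 1 :=
  (valA_le_reach δ dist T sA (Classical.arbitrary _) q).trans
    (reach_le_one δ dist T sA _ q)

theorem valA_T (δ : Q → A → B → D) (dist : D → FDist Q) (T : Q)
    (sA : Strat Q A) : valA δ dist T sA T = 1 :=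
  le_antisymm (valA_le_one δ dist T sA T)
    (le_ciInf fun sB => (reach_T δ dist T sA sB).ge)

theorem bddAbove_valA (δ : Q → A → B → D) (dist : D → FDist Q) (T : Q) (q : Q) :
    BddAbove (Set.range fun sA => valA δ dist T sA q) :=
  ⟨1, by rintro y ⟨sA, rfl⟩; exact valA_le_one δ dist T sA q⟩

theorem valA_le_value (δ : Q → A → B → D) (dist : D → FDist Q) (T : Q)
    (sA : Strat Q A) (q : Q) : valA δ dist T sA q ≤ value δ dist T q :=
  le_ciSup (bddAbove_valA δ dist T q) sA

theorem value_le {δ : Q → A → B → D} {dist : D → FDist Q} {T : Q} {q : Q} {c : ℝ}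
    (h : ∀ sA, valA δ dist T sA q ≤ c) : value δ dist T q ≤ c :=
  ciSup_le h

theorem value_nonneg (δ : Q → A → B → D) (dist : D → FDist Q) (T : Q) (q : Q) :
    0 ≤ value δ dist T q :=
  (valA_nonneg δ dist T (Classical.arbitrary _) q).trans
    (valA_le_value δ dist T _ q)

theorem value_le_one (δ : Q → A → B → D) (dist : D → FDist Q) (T : Q) (q : Q) :
    value δ dist T q ≤ 1 :=
  value_le fun sA => valA_le_one δ dist T sA q

theorem value_T (δ : Q → A → B → D) (dist : D → FDist Q) (T : Q) :
    value δ dist T T = 1 :=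
  le_antisymm (value_le_one δ dist T T)
    ((valA_T δ dist T (Classical.arbitrary _)).symm.trans_le
      (valA_le_value δ dist T _ T))

/-! ### Player A values are at most m (punishing strategy) -/

theorem m_T {δ : Q → A → B → D} {dist : D → FDist Q} {T : Q} {m : Q → ℝ}
    (hm : IsLfpDelta δ dist T m) : m T = 1 := by
  have h := congrFun hm.2.1 T
  simpa [Δop] using h.symm

theorem valGF_locPay_m {δ : Q → A → B → D} {dist : D → FDist Q} {T : Q} {m : Q → ℝ}
    (hm : IsLfpDelta δ dist T m) {q : Q} (hq : q ≠ T) :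
    valGF (locPay δ dist m q) = m q := by
  have h := congrFun hm.2.1 q
  rw [Δop, if_neg hq] at h
  exact h

theorem valA_le_m {δ : Q → A → B → D} {dist : D → FDist Q} {T : Q} {m : Q → ℝ}
    (hm : IsLfpDelta δ dist T m) (sA : Strat Q A) (q : Q) :
    valA δ dist T sA q ≤ m q := by
  classical
  set pun : Strat Q B := fun h q =>
    dirac (Classical.choose (exists_optAct (locPay δ dist m q) (sA h q))) with hpun
  have key : ∀ (n : ℕ) (h : List Q) (q : Q),
      reachSetNAux δ dist {T} n sA pun h q ≤ m q := by
    intro n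
    induction n with
    | zero =>
      intro h q
      unfold reachSetNAux
      split
      · rename_i hmem
        rw [Set.mem_singleton_iff] at hmem
        subst hmem
        rw [m_T hm]
      · exact (hm.1 q).1
    | succ n ih =>
      intro h q
      unfold reachSetNAux
      split
      · rename_i hmem
        rw [Set.mem_singleton_iff] at hmem
        subst hmem
        rw [m_T hm]
      · rename_i hmem
        rw [Set.mem_singleton_iff] at hmem
        have hb := Classical.choose_spec (exists_optAct (locPay δ dist m q) (sA h q))
        set b := Classical.choose (exists_optAct (locPay δ dist m q) (sA h q))
        calc ∑ q', step δ dist (sA h q) (pun h q) q q' *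
              reachSetNAux δ dist {T} n sA pun (h ++ [q]) q'
            ≤ ∑ q', step δ dist (sA h q) (pun h q) q q' * m q' := by
              refine Finset.sum_le_sum fun q' _ => ?_
              exact mul_le_mul_of_nonneg_left (ih _ q') (step_nonneg _ _ _ _ _ _)
          _ = outB (locPay δ dist m q) (sA h q) b := step_outB δ dist m (sA h q) b q
          _ = valStratGF (locPay δ dist m q) (sA h q) := hb
          _ ≤ valGF (locPay δ dist m q) := valStratGF_le_valGF _ _
          _ = m q := valGF_locPay_m hm hmem
  refine (valA_le_reach δ dist T sA pun q).trans ?_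
  exact ciSup_le fun n => key n [] q

theorem value_le_m {δ : Q → A → B → D} {dist : D → FDist Q} {T : Q} {m : Q → ℝ}
    (hm : IsLfpDelta δ dist T m) (q : Q) : value δ dist T q ≤ m q :=
  value_le fun sA => valA_le_m hm sA q

/-! ### Bellman inequality for valA -/

theorem bellman_le (δ : Q → A → B → D) (dist : D → FDist Q) (T : Q)
    (sA : Strat Q A) {q : Q} (hq : q ≠ T) :
    valA δ dist T sA q ≤ valStratGF
      (locPay δ dist (fun q' => valA δ dist T (residual sA [q]) q') q) (sA [] q) := by
  refine le_ciInf fun σB => le_of_forall_pos_le_add fun ε hε => ?_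
  have hch : ∀ q', ∃ t : Strat Q B, reach δ dist T (residual sA [q]) t q' ≤
      valA δ dist T (residual sA [q]) q' + ε := by
    intro q'
    have hlt : valA δ dist T (residual sA [q]) q' <
        valA δ dist T (residual sA [q]) q' + ε := lt_add_of_pos_right _ hε
    obtain ⟨t, ht⟩ := exists_lt_of_ciInf_lt hlt
    exact ⟨t, ht.le⟩
  choose t ht using hch
  set sBg : Strat Q B := fun h q'' =>
    match h with
    | [] => σB
    | _ :: h' =>
      match h' with
      | [] => t q'' [] q''
      | y :: r => t y (y :: r) q'' with hsBg
  have hrec := reach_rec δ dist T sA sBg hq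
  have hcongr : ∀ q', reach δ dist T (residual sA [q]) (residual sBg [q]) q' =
      reach δ dist T (residual sA [q]) (t q') q' := by
    intro q'
    refine iSup_congr fun n => ?_
    refine aux_congr δ dist {T} n _ _ _ _ [] q' rfl rfl ?_
    intro h₂ q₂ hpre
    obtain ⟨r, rfl⟩ := hpre
    exact ⟨rfl, rfl⟩
  calc valA δ dist T sA q ≤ reach δ dist T sA sBg q := valA_le_reach δ dist T sA sBg q
    _ = ∑ q', step δ dist (sA [] q) (σB) q q' *
        reach δ dist T (residual sA [q]) (residual sBg [q]) q' := hrec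
    _ ≤ ∑ q', step δ dist (sA [] q) σB q q' *
        (valA δ dist T (residual sA [q]) q' + ε) := by
        refine Finset.sum_le_sum fun q' _ => ?_
        refine mul_le_mul_of_nonneg_left ?_ (step_nonneg _ _ _ _ _ _)
        rw [hcongr q']
        exact ht q'
    _ = (∑ q', step δ dist (sA [] q) σB q q' * valA δ dist T (residual sA [q]) q') +
        (∑ q', step δ dist (sA [] q) σB q q' * ε) := by
        rw [← Finset.sum_add_distrib]
        refine Finset.sum_congr rfl fun q' _ => ?_
        ring
    _ = out (locPay δ dist (fun q' => valA δ dist T (residual sA [q]) q') q)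
          (sA [] q) σB + ε := by
        rw [step_out, ← Finset.sum_mul, step_sum, one_mul]

/-! ### value is a fixpoint of Δ -/

theorem value_fix (δ : Q → A → B → D) (dist : D → FDist Q) (T : Q) :
    Δop δ dist T (value δ dist T) = value δ dist T := by
  funext q
  unfold Δop
  split
  · rename_i hq; rw [hq]; exact (value_T δ dist T).symm
  · rename_i hq
    have hloc : (fun a b => lift dist (value δ dist T) (δ q a b)) =
        locPay δ dist (value δ dist T) q := rfl
    rw [hloc]
    apply le_antisymm
    · -- valGF ≤ value q : composite strategies
      refine le_of_forall_pos_le_add fun ε hε => ?_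
      have hε2 : 0 < ε / 2 := by positivity
      have h1 : valGF (locPay δ dist (value δ dist T) q) - ε / 2 <
          valGF (locPay δ dist (value δ dist T) q) := by linarith
      obtain ⟨σA, hσA⟩ := exists_lt_of_lt_ciSup h1
      have hch : ∀ q', ∃ sAq : Strat Q A,
          value δ dist T q' - ε / 2 < valA δ dist T sAq q' := by
        intro q'
        have h2 : value δ dist T q' - ε / 2 < value δ dist T q' := by linarith
        exact exists_lt_of_lt_ciSup h2
      choose sAc hsAc using hch
      set comp : Strat Q A := fun h q'' =>
        match h with
        | [] => σA
        | _ :: h' =>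
          match h' with
          | [] => sAc q'' [] q''
          | y :: r => sAc y (y :: r) q'' with hcomp
      have hvc : valGF (locPay δ dist (value δ dist T) q) - ε ≤ valA δ dist T comp q := by
        refine le_valA fun sB => ?_
        have hrec := reach_rec δ dist T comp sB hq
        have hcongr : ∀ q', reach δ dist T (residual comp [q]) (residual sB [q]) q' =
            reach δ dist T (sAc q') (residual sB [q]) q' := by
          intro q'
          refine iSup_congr fun n => ?_
          refine aux_congr δ dist {T} n _ _ _ _ [] q' rfl rfl ?_
          intro h₂ q₂ hpre
          obtain ⟨r, rfl⟩ := hpre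
          exact ⟨rfl, rfl⟩
        calc valGF (locPay δ dist (value δ dist T) q) - ε
            ≤ valStratGF (locPay δ dist (value δ dist T) q) σA - ε / 2 := by linarith
          _ ≤ out (locPay δ dist (value δ dist T) q) σA (sB [] q) - ε / 2 := by
              have h3 := valStratGF_le_out (locPay δ dist (value δ dist T) q) σA (sB [] q)
              linarith
          _ = (∑ q', step δ dist σA (sB [] q) q q' * value δ dist T q') - ε / 2 := by
              rw [step_out]
          _ = ∑ q', step δ dist σA (sB [] q) q q' * (value δ dist T q' - ε / 2) := by
              rw [eq_comm]
              simp only [mul_sub]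
              rw [Finset.sum_sub_distrib, ← Finset.sum_mul, step_sum, one_mul]
          _ ≤ ∑ q', step δ dist σA (sB [] q) q q' *
              reach δ dist T (sAc q') (residual sB [q]) q' := by
              refine Finset.sum_le_sum fun q' _ => ?_
              refine mul_le_mul_of_nonneg_left ?_ (step_nonneg _ _ _ _ _ _)
              exact ((hsAc q').le).trans (valA_le_reach δ dist T (sAc q') (residual sB [q]) q')
          _ = reach δ dist T comp sB q := by
              rw [hrec]
              refine Finset.sum_congr rfl fun q' _ => ?_
              rw [← hcongr q']
      have h4 := valA_le_value δ dist T comp q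
      linarith
    · -- value q ≤ valGF
      refine value_le fun sA => ?_
      calc valA δ dist T sA q
          ≤ valStratGF (locPay δ dist (fun q' => valA δ dist T (residual sA [q]) q') q)
              (sA [] q) := bellman_le δ dist T sA hq
        _ ≤ valStratGF (locPay δ dist (value δ dist T) q) (sA [] q) := by
            refine valStratGF_mono (fun a b => ?_) (sA [] q)
            exact lift_mono (fun q' => valA_le_value δ dist T (residual sA [q]) q') _
        _ ≤ valGF (locPay δ dist (value δ dist T) q) := valStratGF_le_valGF _ _

theorem value_eq_m {δ : Q → A → B → D} {dist : D → FDist Q} {T : Q} {m : Q → ℝ}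
    (hm : IsLfpDelta δ dist T m) (q : Q) : value δ dist T q = m q := by
  refine le_antisymm (value_le_m hm q) ?_
  exact hm.2.2 (value δ dist T)
    (fun q' => ⟨value_nonneg δ dist T q', value_le_one δ dist T q'⟩)
    (value_fix δ dist T) q

/-! ### the invariant along relevant plays -/

theorem outB_mono {u u' : A → B → ℝ} (h : ∀ a b, u a b ≤ u' a b) (σA : FDist A) (b : B) :
    outB u σA b ≤ outB u' σA b :=
  Finset.sum_le_sum fun a _ => mul_le_mul_of_nonneg_left (h a b) (FDist.nonneg σA a)

theorem res_res (sA : Strat Q A) (h : List Q) (q : Q) :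
    CRG.residual (CRG.residual sA h) [q] = CRG.residual sA (h ++ [q]) := by
  funext h' q''
  unfold CRG.residual
  rw [List.append_assoc]

theorem res_apply_nil {X : Type} [Fintype X] (s : Strat Q X) (h : List Q) (q : Q) :
    CRG.residual s h [] q = s h q := by
  unfold CRG.residual
  rw [List.append_nil]

theorem inv_chain {δ : Q → A → B → D} {dist : D → FDist Q} {T : Q} {m : Q → ℝ}
    (hm : IsLfpDelta δ dist T m) (sA : Strat Q A) {h : List Q} {q : Q}
    (hq : q ≠ T) (hinv : valA δ dist T (residual sA h) q = m q) :
    valStratGF (locPay δ dist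
        (fun q' => valA δ dist T (residual sA (h ++ [q])) q') q) (sA h q) = m q ∧
      sA h q ∈ OptA (locPay δ dist m q) := by
  have h1 : m q ≤ valStratGF (locPay δ dist
      (fun q' => valA δ dist T (residual sA (h ++ [q])) q') q) (sA h q) := by
    have hb := bellman_le δ dist T (residual sA h) hq
    rw [res_res, res_apply_nil, hinv] at hb
    exact hb
  have h2 : valStratGF (locPay δ dist
      (fun q' => valA δ dist T (residual sA (h ++ [q])) q') q) (sA h q) ≤
      valStratGF (locPay δ dist m q) (sA h q) :=
    valStratGF_mono (fun a b => lift_mono (fun q' => valA_le_m hm _ q') _) _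
  have h3 : valStratGF (locPay δ dist m q) (sA h q) ≤ valGF (locPay δ dist m q) :=
    valStratGF_le_valGF _ _
  have h4 : valGF (locPay δ dist m q) = m q := valGF_locPay_m hm hq
  constructor
  · linarith
  · show valStratGF (locPay δ dist m q) (sA h q) = valGF (locPay δ dist m q)
    linarith

theorem succ_inv {δ : Q → A → B → D} {dist : D → FDist Q} {T : Q} {m : Q → ℝ}
    (hm : IsLfpDelta δ dist T m) (sA : Strat Q A) {h : List Q} {q : Q}
    (hq : q ≠ T) (hinv : valA δ dist T (residual sA h) q = m q) {b : B}
    (hb : b ∈ optActs (locPay δ dist m q) (sA h q)) {q' : Q}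
    (hpos : step δ dist (sA h q) (dirac b) q q' ≠ 0) :
    valA δ dist T (residual sA (h ++ [q])) q' = m q' := by
  obtain ⟨h1, hopt⟩ := inv_chain hm sA hq hinv
  set g : Q → ℝ := fun q'' => valA δ dist T (residual sA (h ++ [q])) q'' with hg
  have hgm : ∀ q'', g q'' ≤ m q'' := fun q'' => valA_le_m hm _ q''
  have e1 : valStratGF (locPay δ dist g q) (sA h q) ≤
      outB (locPay δ dist g q) (sA h q) b := valStratGF_le_outB _ _ b
  have e2 : outB (locPay δ dist g q) (sA h q) b ≤ outB (locPay δ dist m q) (sA h q) b :=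
    outB_mono (fun a b' => lift_mono hgm _) _ _
  have e3 : outB (locPay δ dist m q) (sA h q) b = valStratGF (locPay δ dist m q) (sA h q) := hb
  have e4 : valStratGF (locPay δ dist m q) (sA h q) = valGF (locPay δ dist m q) := hopt
  have e5 : valGF (locPay δ dist m q) = m q := valGF_locPay_m hm hq
  have e6 : outB (locPay δ dist g q) (sA h q) b = outB (locPay δ dist m q) (sA h q) b := by
    linarith
  have e7 : ∑ q'', step δ dist (sA h q) (dirac b) q q'' * (m q'' - g q'') = 0 := by
    have eg := step_outB δ dist g (sA h q) b q
    have em := step_outB δ dist m (sA h q) b q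
    simp only [mul_sub]
    rw [Finset.sum_sub_distrib, em, eg, e6, sub_self]
  have e8 := (Finset.sum_eq_zero_iff_of_nonneg (fun q'' _ =>
    mul_nonneg (step_nonneg δ dist (sA h q) (dirac b) q q'')
      (sub_nonneg.2 (hgm q'')))).1 e7 q' (Finset.mem_univ q')
  rcases mul_eq_zero.1 e8 with hc | hc
  · exact absurd hc hpos
  · have := sub_eq_zero.1 hc
    linarith [this]

/-! ### SecN monotonicity and the avoiding action -/

theorem SecN_subset_succ (δ : Q → A → B → D) (dist : D → FDist Q) (m : Q → ℝ)
    (T : Q) (Bd : Set Q) (n : ℕ) :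
    SecN δ dist m T Bd n ⊆ SecN δ dist m T Bd (n + 1) := by
  intro x hx
  show x ∈ SecN δ dist m T Bd n ∪ _
  exact Set.mem_union_left _ hx

theorem SecN_mono (δ : Q → A → B → D) (dist : D → FDist Q) (m : Q → ℝ)
    (T : Q) (Bd : Set Q) : Monotone (SecN δ dist m T Bd) := by
  refine monotone_nat_of_le_succ fun n => ?_
  exact SecN_subset_succ δ dist m T Bd n

theorem T_mem_SecN (δ : Q → A → B → D) (dist : D → FDist Q) (m : Q → ℝ)
    (T : Q) (Bd : Set Q) (n : ℕ) : T ∈ SecN δ dist m T Bd n :=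
  SecN_mono δ dist m T Bd (Nat.zero_le n) rfl

theorem natS_mono {dist : D → FDist Q} {S S' : Set Q} (h : S ⊆ S') :
    natS dist S ⊆ natS dist S' := by
  rintro d ⟨q, hq, hne⟩
  exact ⟨q, h hq, hne⟩

theorem avoid_exists {δ : Q → A → B → D} {dist : D → FDist Q} {m : Q → ℝ}
    {T : Q} {Bd : Set Q} (q : Q) (σ : FDist A)
    (hall : ∀ n : ℕ, ∃ b ∈ optActs (locPay δ dist m q) σ,
      ∀ a ∈ supp σ, δ q a b ∉ natS dist (SecN δ dist m T Bd n)) :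
    ∃ b ∈ optActs (locPay δ dist m q) σ,
      ∀ a ∈ supp σ, δ q a b ∉ natS dist (⋃ n, SecN δ dist m T Bd n) := by
  choose bf hb1 hb2 using hall
  obtain ⟨b, hbinf⟩ := Finite.exists_infinite_fiber bf
  have hbinf' : (bf ⁻¹' {b}).Infinite := Set.infinite_coe_iff.1 hbinf
  have hfreq : ∀ N : ℕ, ∃ n, N ≤ n ∧ bf n = b := by
    intro N
    obtain ⟨n, hn, hlt⟩ := hbinf'.exists_gt N
    exact ⟨n, hlt.le, hn⟩
  obtain ⟨n₀, -, hn₀⟩ := hfreq 0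
  refine ⟨b, hn₀ ▸ hb1 n₀, ?_⟩
  intro a ha hmem
  obtain ⟨q', hq', hne⟩ := hmem
  rw [Set.mem_iUnion] at hq'
  obtain ⟨k, hk⟩ := hq'
  obtain ⟨n, hkn, hbn⟩ := hfreq k
  refine hb2 n a ha ?_
  rw [hbn]
  exact ⟨q', SecN_mono δ dist m T Bd hkn hk, hne⟩

/-! ### the leak-scanning machinery -/

def goodSt (δ : Q → A → B → D) (dist : D → FDist Q) (m : Q → ℝ) (T : Q) (Bd : Set Q)
    (q : Q) : Prop :=
  q ∉ (⋃ n, SecN δ dist m T Bd n) ∧ m q ≠ 0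

def findLeak (δ : Q → A → B → D) (dist : D → FDist Q) (m : Q → ℝ) (T : Q) (Bd : Set Q) :
    List Q → Option (List Q × Q × List Q)
  | [] => none
  | x :: xs =>
    if goodSt δ dist m T Bd x then
      (findLeak δ dist m T Bd xs).map fun p => (x :: p.1, p.2.1, p.2.2)
    else some ([], x, xs)

theorem findLeak_allGood (δ : Q → A → B → D) (dist : D → FDist Q) (m : Q → ℝ)
    (T : Q) (Bd : Set Q) : ∀ h : List Q, (∀ x ∈ h, goodSt δ dist m T Bd x) →
    findLeak δ dist m T Bd h = none := by
  intro h
  induction h with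
  | nil => intro _; rfl
  | cons x xs ih =>
    intro hh
    unfold findLeak
    rw [if_pos (hh x List.mem_cons_self),
      ih fun y hy => hh y (List.mem_cons_of_mem x hy)]
    rfl

theorem findLeak_append (δ : Q → A → B → D) (dist : D → FDist Q) (m : Q → ℝ)
    (T : Q) (Bd : Set Q) {x : Q} (hx : ¬ goodSt δ dist m T Bd x) (r : List Q) :
    ∀ H : List Q, (∀ y ∈ H, goodSt δ dist m T Bd y) →
    findLeak δ dist m T Bd (H ++ x :: r) = some (H, x, r) := by
  intro H
  induction H with
  | nil =>
    intro _
    show findLeak _ _ _ _ _ (x :: r) = _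
    unfold findLeak
    rw [if_neg hx]
  | cons y ys ih =>
    intro hH
    show findLeak _ _ _ _ _ (y :: (ys ++ x :: r)) = _
    unfold findLeak
    rw [if_pos (hH y List.mem_cons_self),
      ih fun z hz => hH z (List.mem_cons_of_mem y hz)]
    rfl

theorem T_mem_SecU (δ : Q → A → B → D) (dist : D → FDist Q) (m : Q → ℝ)
    (T : Q) (Bd : Set Q) : T ∈ ⋃ n, SecN δ dist m T Bd n :=
  Set.mem_iUnion.2 ⟨0, rfl⟩

end CRGProof

open CRG CRGProof

/-- if all states of `Bd` are sub-maximizable, then so are all states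
outside `Sec(Bd)`. -/
theorem stmt5
    {A B Q D : Type} [Fintype A] [Fintype B] [Fintype Q] [Fintype D]
    [Nonempty A] [Nonempty B] [Nonempty Q] [Nonempty D] [DecidableEq Q]
    (δ : Q → A → B → D) (dist : D → FDist Q) (T : Q)
    (habs : CRG.Absorbing δ dist T)
    (m : Q → ℝ) (hm : CRG.IsLfpDelta δ dist T m)
    (Bd : Set Q) (hBd : ∀ q ∈ Bd, ¬ CRG.Maximizable δ dist T q) :
    ∀ q : Q, q ∉ CRG.Sec δ dist m T Bd → ¬ CRG.Maximizable δ dist T q := by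
  intro q₀ hq₀ hmax
  obtain ⟨sA, hsA⟩ := hmax
  have hq₀u : q₀ ∉ ⋃ n, SecN δ dist m T Bd n := fun hc => hq₀ (Or.inl hc)
  have hq₀m : m q₀ ≠ 0 := fun hc => hq₀ (Or.inr hc)
  have hmq₀pos : 0 < m q₀ := lt_of_le_of_ne (hm.1 q₀).1 (Ne.symm hq₀m)
  set ε : ℝ := m q₀ / 2 with hεdef
  have hεpos : 0 < ε := by positivity
  -- choice of ε-optimal continuations for Player B
  have hext : ∀ (H : List Q) (x : Q), ∃ t : Strat Q B,
      reach δ dist T (CRG.residual sA H) t x ≤ valA δ dist T (CRG.residual sA H) x + ε := by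
    intro H x
    have hlt : valA δ dist T (CRG.residual sA H) x <
        valA δ dist T (CRG.residual sA H) x + ε := lt_add_of_pos_right _ hεpos
    obtain ⟨t, ht⟩ := exists_lt_of_ciInf_lt hlt
    exact ⟨t, ht.le⟩
  choose tst htst using hext
  -- choice of optimal avoiding actions
  have htot : ∀ (h : List Q) (q : Q), ∃ b : B,
      (∃ b', b' ∈ optActs (locPay δ dist m q) (sA h q) ∧
        ∀ a ∈ supp (sA h q), δ q a b' ∉ natS dist (⋃ n, SecN δ dist m T Bd n)) →
      (b ∈ optActs (locPay δ dist m q) (sA h q) ∧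
        ∀ a ∈ supp (sA h q), δ q a b ∉ natS dist (⋃ n, SecN δ dist m T Bd n)) := by
    intro h q
    by_cases hex : ∃ b', b' ∈ optActs (locPay δ dist m q) (sA h q) ∧
        ∀ a ∈ supp (sA h q), δ q a b' ∉ natS dist (⋃ n, SecN δ dist m T Bd n)
    · obtain ⟨b, hb⟩ := hex
      exact ⟨b, fun _ => hb⟩
    · exact ⟨Classical.arbitrary B, fun hc => absurd hc hex⟩
  choose avoidb havoidb using htot
  -- the punishing Player B strategy
  set sBp : Strat Q B := fun h q =>
    match findLeak δ dist m T Bd h with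
    | some (H, x, r) => tst H x (x :: r) q
    | none => if goodSt δ dist m T Bd q then dirac (avoidb h q) else tst h q [] q
    with hsBpdef
  -- the main induction
  have main : ∀ (n : ℕ) (h : List Q) (q : Q), (∀ x ∈ h, goodSt δ dist m T Bd x) →
      goodSt δ dist m T Bd q → valA δ dist T (CRG.residual sA h) q = m q →
      reachSetNAux δ dist {T} n sA sBp h q ≤ ε := by
    intro n
    induction n with
    | zero =>
      intro h q hh hgq hinv
      have hqT : q ≠ T := fun e => hgq.1 (e ▸ T_mem_SecU δ dist m T Bd)
      unfold reachSetNAux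
      rw [if_neg (by simpa using hqT)]
      exact hεpos.le
    | succ n ih =>
      intro h q hh hgq hinv
      have hqT : q ≠ T := fun e => hgq.1 (e ▸ T_mem_SecU δ dist m T Bd)
      have hh' : ∀ x ∈ h ++ [q], goodSt δ dist m T Bd x := by
        intro x hx
        rcases List.mem_append.1 hx with hx | hx
        · exact hh x hx
        · rw [List.mem_singleton.1 hx]; exact hgq
      obtain ⟨hchain, hopt⟩ := inv_chain hm sA hqT hinv
      -- the current state is not in Bd
      have hqBd : q ∉ Bd := fun hqb =>
        hBd q hqb ⟨CRG.residual sA h, hinv.trans (value_eq_m hm q).symm⟩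
      -- the local strategy is not risky
      have hnoRisk : sA h q ∉ Risk δ dist m q Bd := by
        rintro ⟨-, b, hbopt, a, ha, q'', hq''Bd, hne⟩
        have hpos : CRG.step δ dist (sA h q) (dirac b) q q'' ≠ 0 := by
          rw [step_dirac]
          have h1 : 0 < (sA h q).1 a := lt_of_le_of_ne (FDist.nonneg _ a) (Ne.symm ha)
          have h2 : 0 < (dist (δ q a b)).1 q'' := lt_of_le_of_ne (FDist.nonneg _ _) (Ne.symm hne)
          have h3 : 0 < ∑ a', (sA h q).1 a' * (dist (δ q a' b)).1 q'' :=
            Finset.sum_pos' (fun a' _ => mul_nonneg (FDist.nonneg _ a') (FDist.nonneg _ q''))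
              ⟨a, Finset.mem_univ a, mul_pos h1 h2⟩
          exact ne_of_gt h3
        have hinv'' := succ_inv hm sA hqT hinv hbopt hpos
        exact hBd q'' hq''Bd ⟨CRG.residual sA (h ++ [q]), hinv''.trans (value_eq_m hm q'').symm⟩
      -- for every level there is an optimal avoiding action
      have hn : ∀ k : ℕ, ∃ b ∈ optActs (locPay δ dist m q) (sA h q),
          ∀ a ∈ supp (sA h q), δ q a b ∉ natS dist (SecN δ dist m T Bd k) := by
        intro k
        have hqSec : q ∉ SecN δ dist m T Bd (k + 1) :=
          fun hmem => hgq.1 (Set.mem_iUnion.2 ⟨k + 1, hmem⟩)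
        have hnotEff : sA h q ∉ Eff δ dist m q (SecN δ dist m T Bd k) Bd := by
          intro hmem
          exact hqSec (Or.inr ⟨hqBd, ⟨sA h q, hmem⟩⟩)
        have hnotProg : sA h q ∉ Prog δ dist m q (SecN δ dist m T Bd k) :=
          fun hp => hnotEff ⟨hp, hnoRisk⟩
        have hneg : ¬ ∀ b ∈ optActs (locPay δ dist m q) (sA h q),
            ∃ a ∈ supp (sA h q), δ q a b ∈ natS dist (SecN δ dist m T Bd k) :=
          fun hp => hnotProg ⟨hopt, hp⟩
        push_neg at hneg
        obtain ⟨b, hb1, hb2⟩ := hneg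
        exact ⟨b, hb1, hb2⟩
      obtain ⟨b', hb'1, hb'2⟩ := avoid_exists q (sA h q) hn
      have hav := havoidb h q ⟨b', hb'1, hb'2⟩
      -- compute the strategy at the current history
      have hfl : findLeak δ dist m T Bd h = none := findLeak_allGood δ dist m T Bd h hh
      have hsbp : sBp h q = dirac (avoidb h q) := by
        rw [hsBpdef]
        simp only [hfl]
        rw [if_pos hgq]
      unfold reachSetNAux
      rw [if_neg (by simpa using hqT), hsbp]
      have hterm : ∀ q', CRG.step δ dist (sA h q) (dirac (avoidb h q)) q q' *
          reachSetNAux δ dist {T} n sA sBp (h ++ [q]) q' ≤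
          CRG.step δ dist (sA h q) (dirac (avoidb h q)) q q' * ε := by
        intro q'
        rcases eq_or_ne (CRG.step δ dist (sA h q) (dirac (avoidb h q)) q q') 0 with h0 | h0
        · rw [h0, zero_mul, zero_mul]
        · refine mul_le_mul_of_nonneg_left ?_ (step_nonneg _ _ _ _ _ _)
          -- the successor is outside the union of the SecN
          have hq'u : q' ∉ ⋃ n, SecN δ dist m T Bd n := by
            intro hq'mem
            have h0' := h0
            rw [step_dirac] at h0'
            obtain ⟨a, -, hterm⟩ := Finset.exists_ne_zero_of_sum_ne_zero h0'
            rcases mul_ne_zero_iff.1 hterm with ⟨ha, hne⟩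
            exact hav.2 a ha ⟨q', hq'mem, hne⟩
          have hinv' := succ_inv hm sA hqT hinv hav.1 h0
          rcases eq_or_ne (m q') 0 with hm0 | hm0
          · -- leak to a state of value 0
            have hq'ng : ¬ goodSt δ dist m T Bd q' := fun hg => hg.2 hm0
            have hfl' : findLeak δ dist m T Bd (h ++ [q]) = none :=
              findLeak_allGood δ dist m T Bd (h ++ [q]) hh' 
            have hshift : reachSetNAux δ dist {T} n sA sBp (h ++ [q]) q' =
                reachSetNAux δ dist {T} n (CRG.residual sA (h ++ [q]))
                  (CRG.residual sBp (h ++ [q])) [] q' := by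
              conv_lhs => rw [← List.append_nil (h ++ [q])]
              exact aux_shift δ dist {T} n sA sBp (h ++ [q]) [] q'
            have hagree : reachSetNAux δ dist {T} n (CRG.residual sA (h ++ [q]))
                (CRG.residual sBp (h ++ [q])) [] q' =
                reachSetNAux δ dist {T} n (CRG.residual sA (h ++ [q]))
                  (tst (h ++ [q]) q') [] q' := by
              refine aux_congr δ dist {T} n _ _ _ _ [] q' rfl ?_ ?_
              · rw [res_apply_nil, hsBpdef]
                simp only [hfl']
                rw [if_neg hq'ng]
              · intro h₂ q₂ hpre
                obtain ⟨r, rfl⟩ := hpre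
                refine ⟨rfl, ?_⟩
                show sBp ((h ++ [q]) ++ (q' :: r)) q₂ = _
                rw [hsBpdef]
                simp only [findLeak_append δ dist m T Bd hq'ng r (h ++ [q]) hh']
                rfl
            rw [hshift, hagree]
            calc reachSetNAux δ dist {T} n (CRG.residual sA (h ++ [q]))
                  (tst (h ++ [q]) q') [] q'
                ≤ reach δ dist T (CRG.residual sA (h ++ [q])) (tst (h ++ [q]) q') q' :=
                  reachN_le_reach δ dist T n _ _ q'
              _ ≤ valA δ dist T (CRG.residual sA (h ++ [q])) q' + ε := htst (h ++ [q]) q'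
              _ = ε := by rw [hinv', hm0, zero_add]
          · exact ih (h ++ [q]) q' hh' ⟨hq'u, hm0⟩ hinv'
      calc ∑ q', CRG.step δ dist (sA h q) (dirac (avoidb h q)) q q' *
            reachSetNAux δ dist {T} n sA sBp (h ++ [q]) q'
          ≤ ∑ q', CRG.step δ dist (sA h q) (dirac (avoidb h q)) q q' * ε :=
            Finset.sum_le_sum fun q' _ => hterm q'
        _ = ε := by rw [← Finset.sum_mul, step_sum, one_mul]
  -- conclusion
  have hgood₀ : goodSt δ dist m T Bd q₀ := ⟨hq₀u, hq₀m⟩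
  have hinv₀ : valA δ dist T (CRG.residual sA []) q₀ = m q₀ := by
    show valA δ dist T sA q₀ = m q₀
    rw [hsA, value_eq_m hm]
  have hreach : reach δ dist T sA sBp q₀ ≤ ε :=
    ciSup_le fun n => main n [] q₀ (by simp) hgood₀ hinv₀
  have hfin : m q₀ ≤ ε := by
    calc m q₀ = valA δ dist T sA q₀ := hinv₀.symm
      _ ≤ reach δ dist T sA sBp q₀ := valA_le_reach δ dist T sA sBp q₀
      _ ≤ ε := hreach
  rw [hεdef] at hfin
  linarith
end
end

section
/- In a finite concurrent reachability game with value vector m, for every ε > 0 there exists a positional Player A strategy s_A such that val(s_A)(q) = m(q) for every q ∈ Sec(Bad), and val(s_A)(q) ≥ m(q) − ε for every q ∈ Bad. In particular, Sec(Bad) ⊆ MaxQ_A. -/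
open scoped BigOperators Classical

noncomputable section

namespace CRG

section Aux
set_option linter.unusedSectionVars false

variable {A B Q D : Type} [Fintype A] [Fintype B] [Fintype Q] [Fintype D]
variable [Nonempty A] [Nonempty B] [Nonempty Q] [Nonempty D] [DecidableEq Q]

lemma FDist.nonneg {X : Type} [Fintype X] (σ : FDist X) (x : X) : 0 ≤ σ.1 x := σ.2.1 x

lemma FDist.sum_one {X : Type} [Fintype X] (σ : FDist X) : ∑ x, σ.1 x = 1 := σ.2.2

lemma FDist.le_one {X : Type} [Fintype X] (σ : FDist X) (x : X) : σ.1 x ≤ 1 := by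
  have h : σ.1 x ≤ ∑ y, σ.1 y :=
    Finset.single_le_sum (fun y _ => σ.2.1 y) (Finset.mem_univ x)
  rw [σ.2.2] at h; exact h

def unif (X : Type) [Fintype X] [Nonempty X] : FDist X :=
  ⟨fun _ => (Fintype.card X : ℝ)⁻¹, by
    constructor
    · intro x; positivity
    · rw [Finset.sum_const, Finset.card_univ, nsmul_eq_mul]
      rw [mul_inv_cancel₀]
      exact Nat.cast_ne_zero.mpr Fintype.card_ne_zero⟩

instance instNonemptyFDist {X : Type} [Fintype X] [Nonempty X] : Nonempty (FDist X) :=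
  ⟨unif X⟩

lemma sum_prod_one (σA : FDist A) (σB : FDist B) :
    ∑ a, ∑ b, σA.1 a * σB.1 b = 1 := by
  have : ∀ a, ∑ b, σA.1 a * σB.1 b = σA.1 a := by
    intro a; rw [← Finset.mul_sum, σB.2.2, mul_one]
  simp_rw [this]; exact σA.2.2

lemma out_eq_sum_outB (u : A → B → ℝ) (σA : FDist A) (σB : FDist B) :
    out u σA σB = ∑ b, σB.1 b * outB u σA b := by
  unfold out outB
  rw [Finset.sum_comm]
  refine Finset.sum_congr rfl fun b _ => ?_
  rw [Finset.mul_sum]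
  refine Finset.sum_congr rfl fun a _ => by ring

lemma out_dirac [DecidableEq B] (u : A → B → ℝ) (σA : FDist A) (b : B) :
    out u σA (dirac b) = outB u σA b := by
  rw [out_eq_sum_outB]
  unfold dirac
  rw [Finset.sum_eq_single b]
  · simp
  · intro b' _ hb'; simp [hb']
  · intro h; exact absurd (Finset.mem_univ b) h

lemma outB_nonneg {u : A → B → ℝ} (h0 : ∀ a b, 0 ≤ u a b) (σA : FDist A) (b : B) :
    0 ≤ outB u σA b :=
  Finset.sum_nonneg fun a _ => mul_nonneg (σA.2.1 a) (h0 a b)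

lemma outB_le_one {u : A → B → ℝ} (h1 : ∀ a b, u a b ≤ 1) (σA : FDist A) (b : B) :
    outB u σA b ≤ 1 := by
  calc outB u σA b ≤ ∑ a, σA.1 a := Finset.sum_le_sum fun a _ => by
        calc σA.1 a * u a b ≤ σA.1 a * 1 := by
              exact mul_le_mul_of_nonneg_left (h1 a b) (σA.2.1 a)
        _ = σA.1 a := mul_one _
    _ = 1 := σA.2.2

lemma outB_mono {u u' : A → B → ℝ} (h : ∀ a b, u a b ≤ u' a b) (σA : FDist A) (b : B) :
    outB u σA b ≤ outB u' σA b :=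
  Finset.sum_le_sum fun a _ => mul_le_mul_of_nonneg_left (h a b) (σA.2.1 a)

lemma le_valStratGF {u : A → B → ℝ} {σA : FDist A} {c : ℝ}
    (h : ∀ b, c ≤ outB u σA b) : c ≤ valStratGF u σA := by
  refine le_ciInf fun σB => ?_
  rw [out_eq_sum_outB]
  calc c = ∑ b, σB.1 b * c := by rw [← Finset.sum_mul, σB.2.2, one_mul]
    _ ≤ ∑ b, σB.1 b * outB u σA b :=
        Finset.sum_le_sum fun b _ => mul_le_mul_of_nonneg_left (h b) (σB.2.1 b)

lemma valStratGF_le_outB [DecidableEq B] {u : A → B → ℝ} (h0 : ∀ a b, 0 ≤ u a b)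
    (σA : FDist A) (b : B) : valStratGF u σA ≤ outB u σA b := by
  rw [← out_dirac]
  refine ciInf_le ⟨0, ?_⟩ (dirac b)
  rintro y ⟨σB, rfl⟩
  show (0:ℝ) ≤ out u σA σB
  rw [out_eq_sum_outB]
  exact Finset.sum_nonneg fun b' _ => mul_nonneg (σB.2.1 b') (outB_nonneg h0 σA b')

lemma valStratGF_nonneg {u : A → B → ℝ} (h0 : ∀ a b, 0 ≤ u a b) (σA : FDist A) :
    0 ≤ valStratGF u σA :=
  le_valStratGF fun b => outB_nonneg h0 σA b

lemma valStratGF_le_one {u : A → B → ℝ} (h0 : ∀ a b, 0 ≤ u a b) (h1 : ∀ a b, u a b ≤ 1)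
    (σA : FDist A) : valStratGF u σA ≤ 1 := by
  classical
  exact le_trans (valStratGF_le_outB h0 σA (Classical.arbitrary B))
    (outB_le_one h1 σA _)

lemma bddAbove_valStratGF {u : A → B → ℝ} (h0 : ∀ a b, 0 ≤ u a b)
    (h1 : ∀ a b, u a b ≤ 1) : BddAbove (Set.range (valStratGF u)) := by
  refine ⟨1, ?_⟩
  rintro y ⟨σA, rfl⟩
  exact valStratGF_le_one h0 h1 σA

lemma valStratGF_le_valGF {u : A → B → ℝ} (h0 : ∀ a b, 0 ≤ u a b)
    (h1 : ∀ a b, u a b ≤ 1) (σA : FDist A) : valStratGF u σA ≤ valGF u :=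
  le_ciSup (bddAbove_valStratGF h0 h1) σA

lemma valGF_le {u : A → B → ℝ} {c : ℝ} (h : ∀ σA, valStratGF u σA ≤ c) :
    valGF u ≤ c := ciSup_le h

lemma valGF_nonneg {u : A → B → ℝ} (h0 : ∀ a b, 0 ≤ u a b) (h1 : ∀ a b, u a b ≤ 1) :
    0 ≤ valGF u :=
  le_trans (valStratGF_nonneg h0 (unif A)) (valStratGF_le_valGF h0 h1 (unif A))

lemma valGF_le_one {u : A → B → ℝ} (h0 : ∀ a b, 0 ≤ u a b) (h1 : ∀ a b, u a b ≤ 1) :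
    valGF u ≤ 1 :=
  valGF_le fun σA => valStratGF_le_one h0 h1 σA

lemma exists_outB_le_valGF [DecidableEq B] {u : A → B → ℝ} (h0 : ∀ a b, 0 ≤ u a b)
    (h1 : ∀ a b, u a b ≤ 1) (σA : FDist A) : ∃ b, outB u σA b ≤ valGF u := by
  classical
  obtain ⟨b, _, hb⟩ := Finset.exists_min_image Finset.univ (outB u σA)
    ⟨Classical.arbitrary B, Finset.mem_univ _⟩
  refine ⟨b, ?_⟩
  have h2 : outB u σA b ≤ valStratGF u σA :=
    le_valStratGF fun b' => hb b' (Finset.mem_univ b')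
  exact le_trans h2 (valStratGF_le_valGF h0 h1 σA)

lemma out_nonneg {u : A → B → ℝ} (h0 : ∀ a b, 0 ≤ u a b) (σA : FDist A)
    (σB : FDist B) : 0 ≤ out u σA σB :=
  Finset.sum_nonneg fun a _ => Finset.sum_nonneg fun b _ =>
    mul_nonneg (mul_nonneg (σA.2.1 a) (σB.2.1 b)) (h0 a b)

lemma valGF_le_of_le_add {u u' : A → B → ℝ} {ε : ℝ}
    (hu0 : ∀ a b, 0 ≤ u a b)
    (h0 : ∀ a b, 0 ≤ u' a b) (h1 : ∀ a b, u' a b ≤ 1)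
    (h : ∀ a b, u a b ≤ u' a b + ε) : valGF u ≤ valGF u' + ε := by
  refine valGF_le fun σA => ?_
  have key : valStratGF u σA ≤ valStratGF u' σA + ε := by
    have h2 : valStratGF u σA - ε ≤ valStratGF u' σA := by
      refine le_ciInf fun σB => ?_
      have h3 : valStratGF u σA ≤ out u σA σB := by
        refine ciInf_le ⟨0, ?_⟩ σB
        rintro y ⟨σB', rfl⟩
        exact out_nonneg hu0 σA σB'
      have h4 : out u σA σB ≤ out u' σA σB + ε := by
        unfold out
        have hterm : ∀ a b, σA.1 a * σB.1 b * u a b ≤ σA.1 a * σB.1 b * u' a b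
            + σA.1 a * σB.1 b * ε := by
          intro a b
          have hnn : 0 ≤ σA.1 a * σB.1 b := mul_nonneg (σA.2.1 a) (σB.2.1 b)
          nlinarith [h a b]
        calc ∑ a, ∑ b, σA.1 a * σB.1 b * u a b
            ≤ ∑ a, ∑ b, (σA.1 a * σB.1 b * u' a b + σA.1 a * σB.1 b * ε) :=
              Finset.sum_le_sum fun a _ => Finset.sum_le_sum fun b _ => hterm a b
          _ = (∑ a, ∑ b, σA.1 a * σB.1 b * u' a b)
              + (∑ a, ∑ b, σA.1 a * σB.1 b) * ε := by
              rw [Finset.sum_mul, ← Finset.sum_add_distrib]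
              refine Finset.sum_congr rfl fun a _ => ?_
              rw [Finset.sum_mul, ← Finset.sum_add_distrib]
          _ = (∑ a, ∑ b, σA.1 a * σB.1 b * u' a b) + ε := by
              rw [sum_prod_one]; ring
      linarith
    linarith
  exact le_trans key (by linarith [valStratGF_le_valGF h0 h1 σA])

lemma lift_nonneg {dist : D → FDist Q} {v : Q → ℝ} (h : ∀ q, 0 ≤ v q) (d : D) :
    0 ≤ lift dist v d :=
  Finset.sum_nonneg fun q _ => mul_nonneg ((dist d).2.1 q) (h q)

lemma lift_le_one {dist : D → FDist Q} {v : Q → ℝ} (h : ∀ q, v q ≤ 1) (d : D) :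
    lift dist v d ≤ 1 := by
  calc lift dist v d ≤ ∑ q, (dist d).1 q := Finset.sum_le_sum fun q _ => by
        calc (dist d).1 q * v q ≤ (dist d).1 q * 1 :=
              mul_le_mul_of_nonneg_left (h q) ((dist d).2.1 q)
          _ = (dist d).1 q := mul_one _
    _ = 1 := (dist d).2.2

lemma lift_mono {dist : D → FDist Q} {v v' : Q → ℝ} (h : ∀ q, v q ≤ v' q) (d : D) :
    lift dist v d ≤ lift dist v' d :=
  Finset.sum_le_sum fun q _ => mul_le_mul_of_nonneg_left (h q) ((dist d).2.1 q)

lemma lift_sub_const {dist : D → FDist Q} (v : Q → ℝ) (c : ℝ) (d : D) :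
    lift dist (fun q => v q - c) d = lift dist v d - c := by
  unfold lift
  simp_rw [mul_sub]
  rw [Finset.sum_sub_distrib, ← Finset.sum_mul, (dist d).2.2, one_mul]

end Aux

end CRG


namespace CRG

section Aux2
set_option linter.unusedSectionVars false

variable {A B Q D : Type} [Fintype A] [Fintype B] [Fintype Q] [Fintype D]
variable [Nonempty A] [Nonempty B] [Nonempty Q] [Nonempty D] [DecidableEq Q]
variable (δ : Q → A → B → D) (dist : D → FDist Q)

lemma step_nonneg (σA : FDist A) (σB : FDist B) (q q' : Q) :
    0 ≤ step δ dist σA σB q q' :=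
  Finset.sum_nonneg fun a _ => Finset.sum_nonneg fun b _ =>
    mul_nonneg (mul_nonneg (σA.2.1 a) (σB.2.1 b)) ((dist (δ q a b)).2.1 q')

lemma sum_step_mul (σA : FDist A) (σB : FDist B) (q : Q) (f : Q → ℝ) :
    ∑ q', step δ dist σA σB q q' * f q'
      = ∑ b, σB.1 b * outB (locPay δ dist f q) σA b := by
  calc ∑ q', step δ dist σA σB q q' * f q'
      = ∑ q', ∑ a, ∑ b, σA.1 a * σB.1 b * (dist (δ q a b)).1 q' * f q' := by
        refine Finset.sum_congr rfl fun q' _ => ?_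
        unfold step
        rw [Finset.sum_mul]
        exact Finset.sum_congr rfl fun a _ => by rw [Finset.sum_mul]
    _ = ∑ a, ∑ q', ∑ b, σA.1 a * σB.1 b * (dist (δ q a b)).1 q' * f q' :=
        Finset.sum_comm
    _ = ∑ a, ∑ b, ∑ q', σA.1 a * σB.1 b * (dist (δ q a b)).1 q' * f q' :=
        Finset.sum_congr rfl fun a _ => Finset.sum_comm
    _ = ∑ b, ∑ a, ∑ q', σA.1 a * σB.1 b * (dist (δ q a b)).1 q' * f q' :=
        Finset.sum_comm
    _ = ∑ b, σB.1 b * outB (locPay δ dist f q) σA b := by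
        refine Finset.sum_congr rfl fun b _ => ?_
        unfold outB locPay lift
        rw [Finset.mul_sum]
        refine Finset.sum_congr rfl fun a _ => ?_
        rw [Finset.mul_sum, Finset.mul_sum]
        exact Finset.sum_congr rfl fun q' _ => by ring

lemma outB_locPay_one (σA : FDist A) (q : Q) (b : B) :
    outB (locPay δ dist (fun _ => (1:ℝ)) q) σA b = 1 := by
  unfold outB locPay lift
  simp_rw [mul_one]
  have : ∀ a : A, σA.1 a * ∑ q', (dist (δ q a b)).1 q' = σA.1 a := by
    intro a; rw [(dist (δ q a b)).2.2, mul_one]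
  simp_rw [this]
  exact σA.2.2

lemma sum_step_one (σA : FDist A) (σB : FDist B) (q : Q) :
    ∑ q', step δ dist σA σB q q' = 1 := by
  have h := sum_step_mul δ dist σA σB q (fun _ => (1:ℝ))
  simp_rw [mul_one, outB_locPay_one] at h
  rw [h]
  simp only [mul_one]
  exact σB.2.2

lemma sum_step_dirac [DecidableEq B] (σA : FDist A) (b : B) (q : Q) (f : Q → ℝ) :
    ∑ q', step δ dist σA (dirac b) q q' * f q' = outB (locPay δ dist f q) σA b := by
  rw [sum_step_mul]
  show ∑ b', (if b' = b then (1:ℝ) else 0) * _ = _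
  rw [Finset.sum_eq_single b]
  · simp
  · intro b' _ hb'; simp [hb']
  · intro h; exact absurd (Finset.mem_univ b) h

lemma outB_locPay_eq_sum (σA : FDist A) (q : Q) (b : B) (f : Q → ℝ) :
    outB (locPay δ dist f q) σA b
      = ∑ q', (∑ a, σA.1 a * (dist (δ q a b)).1 q') * f q' := by
  unfold outB locPay lift
  calc ∑ a, σA.1 a * ∑ q', (dist (δ q a b)).1 q' * f q'
      = ∑ a, ∑ q', σA.1 a * ((dist (δ q a b)).1 q' * f q') := by
        exact Finset.sum_congr rfl fun a _ => Finset.mul_sum _ _ _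
    _ = ∑ q', ∑ a, σA.1 a * ((dist (δ q a b)).1 q' * f q') := Finset.sum_comm
    _ = ∑ q', (∑ a, σA.1 a * (dist (δ q a b)).1 q') * f q' := by
        refine Finset.sum_congr rfl fun q' _ => ?_
        rw [Finset.sum_mul]
        exact Finset.sum_congr rfl fun a _ => by ring

variable (T : Q)

lemma locPay_nonneg {v : Q → ℝ} (hv : ∀ q, 0 ≤ v q) (q : Q) :
    ∀ a b, 0 ≤ locPay δ dist v q a b := fun a b => lift_nonneg hv _

lemma locPay_le_one {v : Q → ℝ} (hv : ∀ q, v q ≤ 1) (q : Q) :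
    ∀ a b, locPay δ dist v q a b ≤ 1 := fun a b => lift_le_one hv _

lemma Δop_mono {v v' : Q → ℝ} (hv0 : ∀ q, 0 ≤ v q)
    (hv'0 : ∀ q, 0 ≤ v' q) (hv'1 : ∀ q, v' q ≤ 1)
    (h : ∀ q, v q ≤ v' q) (q : Q) : Δop δ dist T v q ≤ Δop δ dist T v' q := by
  unfold Δop
  by_cases hq : q = T
  · simp [hq]
  · simp only [if_neg hq]
    have := valGF_le_of_le_add (u := fun a b => lift dist v (δ q a b))
      (u' := fun a b => lift dist v' (δ q a b)) (ε := 0)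
      (fun a b => lift_nonneg hv0 _) (fun a b => lift_nonneg hv'0 _)
      (fun a b => lift_le_one hv'1 _)
      (fun a b => by rw [add_zero]; exact lift_mono h _)
    linarith

lemma Δop_mem_Icc {v : Q → ℝ} (hv0 : ∀ q, 0 ≤ v q) (hv1 : ∀ q, v q ≤ 1) (q : Q) :
    Δop δ dist T v q ∈ Set.Icc (0:ℝ) 1 := by
  unfold Δop
  by_cases hq : q = T
  · simp [hq]
  · simp only [if_neg hq]
    constructor
    · exact valGF_nonneg (fun a b => lift_nonneg hv0 _) (fun a b => lift_le_one hv1 _)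
    · exact valGF_le_one (fun a b => lift_nonneg hv0 _) (fun a b => lift_le_one hv1 _)

lemma vseq_mem_Icc : ∀ n q, vseq δ dist T n q ∈ Set.Icc (0:ℝ) 1 := by
  intro n
  induction n with
  | zero => intro q; unfold vseq; split <;> norm_num
  | succ n ih =>
      intro q
      exact Δop_mem_Icc δ dist T (fun q => (ih q).1) (fun q => (ih q).2) q

variable {m : Q → ℝ}

lemma m_T_eq_one (hm : IsLfpDelta δ dist T m) : m T = 1 := by
  have := congrFun hm.2.1 T
  unfold Δop at this
  simp at this
  exact this.symm

lemma m_fix (hm : IsLfpDelta δ dist T m) {q : Q} (hq : q ≠ T) : valGF (locPay δ dist m q) = m q := by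
  have := congrFun hm.2.1 q
  unfold Δop at this
  rw [if_neg hq] at this
  exact this

lemma vseq_le_m (hm : IsLfpDelta δ dist T m) : ∀ n q, vseq δ dist T n q ≤ m q := by
  intro n
  induction n with
  | zero =>
      intro q
      unfold vseq
      split
      · next h => rw [h, m_T_eq_one δ dist T hm]
      · exact (hm.1 q).1
  | succ n ih =>
      intro q
      have h := Δop_mono δ dist T (fun q => (vseq_mem_Icc δ dist T n q).1)
        (fun q => (hm.1 q).1) (fun q => (hm.1 q).2) ih q
      rw [hm.2.1] at h
      exact h

lemma vseq_succ_le : ∀ n q, vseq δ dist T n q ≤ vseq δ dist T (n+1) q := by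
  intro n
  induction n with
  | zero =>
      intro q
      show vseq δ dist T 0 q ≤ Δop δ dist T (vseq δ dist T 0) q
      unfold Δop vseq
      by_cases hq : q = T
      · simp [hq]
      · simp only [if_neg hq]
        exact valGF_nonneg
          (fun a b => lift_nonneg (fun q => (vseq_mem_Icc δ dist T 0 q).1) _)
          (fun a b => lift_le_one (fun q => (vseq_mem_Icc δ dist T 0 q).2) _)
  | succ n ih =>
      intro q
      exact Δop_mono δ dist T (fun q => (vseq_mem_Icc δ dist T n q).1)
        (fun q => (vseq_mem_Icc δ dist T (n+1) q).1)
        (fun q => (vseq_mem_Icc δ dist T (n+1) q).2) ih q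

lemma vseq_mono {n n' : ℕ} (h : n ≤ n') (q : Q) :
    vseq δ dist T n q ≤ vseq δ dist T n' q := by
  induction n' with
  | zero => simp_all
  | succ k ih =>
      rcases Nat.lt_or_ge n (k+1) with hlt | hge
      · exact le_trans (ih (Nat.lt_succ_iff.mp hlt)) (vseq_succ_le δ dist T k q)
      · have : n = k + 1 := le_antisymm h hge
        rw [this]

lemma vseq_T (n : ℕ) : vseq δ dist T n T = 1 := by
  cases n with
  | zero => simp [vseq]
  | succ k => simp [vseq, Δop]

lemma vseq_sup (hm : IsLfpDelta δ dist T m) (q : Q) : ⨆ n, vseq δ dist T n q = m q := by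
  set L : Q → ℝ := fun q => ⨆ n, vseq δ dist T n q with hL
  have hbdd : ∀ q, BddAbove (Set.range fun n => vseq δ dist T n q) := by
    intro q
    exact ⟨1, by rintro y ⟨n, rfl⟩; exact (vseq_mem_Icc δ dist T n q).2⟩
  have hLm : ∀ q, L q ≤ m q := fun q => ciSup_le fun n => vseq_le_m δ dist T hm n q
  have hL0 : ∀ q, 0 ≤ L q := fun q =>
    le_trans (vseq_mem_Icc δ dist T 0 q).1 (le_ciSup (hbdd q) 0)
  have hL1 : ∀ q, L q ≤ 1 := fun q => ciSup_le fun n => (vseq_mem_Icc δ dist T n q).2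
  have hvL : ∀ n q, vseq δ dist T n q ≤ L q := fun n q => le_ciSup (hbdd q) n
  have hfix1 : ∀ q, L q ≤ Δop δ dist T L q := by
    intro q
    refine ciSup_le fun n => ?_
    calc vseq δ dist T n q ≤ vseq δ dist T (n+1) q := vseq_succ_le δ dist T n q
      _ = Δop δ dist T (vseq δ dist T n) q := rfl
      _ ≤ Δop δ dist T L q :=
          Δop_mono δ dist T (fun q => (vseq_mem_Icc δ dist T n q).1) hL0 hL1
            (hvL n) q
  have hfix2 : ∀ q, Δop δ dist T L q ≤ L q := by
    intro q
    have key : ∀ ε : ℝ, 0 < ε → Δop δ dist T L q ≤ L q + ε := by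
      intro ε hε
      -- choose a uniform approximation index
      have hex : ∀ q' : Q, ∃ n, L q' - ε < vseq δ dist T n q' := by
        intro q'
        have : L q' - ε < ⨆ n, vseq δ dist T n q' := by
          have : L q' - ε < L q' := by linarith
          exact this
        exact exists_lt_of_lt_ciSup this
      choose nf hnf using hex
      set N := Finset.univ.sup nf with hN
      have hNf : ∀ q', L q' - ε < vseq δ dist T N q' := by
        intro q'
        exact lt_of_lt_of_le (hnf q')
          (vseq_mono δ dist T (Finset.le_sup (Finset.mem_univ q')) q')
      have step1 : Δop δ dist T L q ≤ Δop δ dist T (vseq δ dist T N) q + ε := by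
        unfold Δop
        by_cases hq : q = T
        · simp [hq]; linarith
        · simp only [if_neg hq]
          refine valGF_le_of_le_add (fun a b => lift_nonneg hL0 _)
            (fun a b => lift_nonneg (fun q => (vseq_mem_Icc δ dist T N q).1) _)
            (fun a b => lift_le_one (fun q => (vseq_mem_Icc δ dist T N q).2) _)
            (fun a b => ?_)
          have h1 : ∀ q', L q' ≤ vseq δ dist T N q' + ε := fun q' =>
            le_of_lt (by linarith [hNf q'])
          calc lift dist L (δ q a b)
              ≤ lift dist (fun q' => vseq δ dist T N q' + ε) (δ q a b) :=
                lift_mono h1 _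
            _ = lift dist (vseq δ dist T N) (δ q a b) + ε := by
                have := lift_sub_const (dist := dist)
                  (fun q' => vseq δ dist T N q' + ε) ε (δ q a b)
                simp at this
                linarith [this]
      calc Δop δ dist T L q ≤ Δop δ dist T (vseq δ dist T N) q + ε := step1
        _ = vseq δ dist T (N+1) q + ε := rfl
        _ ≤ L q + ε := by linarith [hvL (N+1) q]
    by_contra hcon
    push_neg at hcon
    have := key ((Δop δ dist T L q - L q)/2) (by linarith)
    linarith
  have hfixed : Δop δ dist T L = L := funext fun q => le_antisymm (hfix2 q) (hfix1 q)
  have hmin := hm.2.2 L (fun q => ⟨hL0 q, hL1 q⟩) hfixed q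
  exact le_antisymm (hLm q) hmin

lemma exists_vseq_ge (hm : IsLfpDelta δ dist T m) {ε : ℝ} (hε : 0 < ε) :
    ∃ N : ℕ, 1 ≤ N ∧ ∀ q, m q - ε ≤ vseq δ dist T N q := by
  have hex : ∀ q' : Q, ∃ n, m q' - ε < vseq δ dist T n q' := by
    intro q'
    have h1 : m q' - ε < ⨆ n, vseq δ dist T n q' := by
      rw [vseq_sup δ dist T hm]; linarith
    exact exists_lt_of_lt_ciSup h1
  choose nf hnf using hex
  refine ⟨max 1 (Finset.univ.sup nf), le_max_left _ _, fun q => ?_⟩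
  have h2 : vseq δ dist T (nf q) q ≤ vseq δ dist T (max 1 (Finset.univ.sup nf)) q :=
    vseq_mono δ dist T (n := nf q) (n' := max 1 (Finset.univ.sup nf))
      (le_trans (Finset.le_sup (Finset.mem_univ q)) (le_max_right 1 _)) q
  linarith [hnf q, h2]

end Aux2

end CRG


namespace CRG

section Aux3
set_option linter.unusedSectionVars false

variable {A B Q D : Type} [Fintype A] [Fintype B] [Fintype Q] [Fintype D]
variable [Nonempty A] [Nonempty B] [Nonempty Q] [Nonempty D] [DecidableEq Q]
variable (δ : Q → A → B → D) (dist : D → FDist Q) (T : Q)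

instance instNonemptyStrat {X : Type} [Fintype X] [Nonempty X] : Nonempty (Strat Q X) :=
  ⟨fun _ _ => unif X⟩

lemma reachSetNAux_nonneg (S : Set Q) (sA : Strat Q A) (sB : Strat Q B) :
    ∀ (n : ℕ) (h : List Q) (q : Q), 0 ≤ reachSetNAux δ dist S n sA sB h q := by
  intro n
  induction n with
  | zero =>
      intro h q
      simp only [reachSetNAux]
      split <;> norm_num
  | succ n ih =>
      intro h q
      simp only [reachSetNAux]
      split
      · norm_num
      · exact Finset.sum_nonneg fun q' _ =>
          mul_nonneg (step_nonneg δ dist _ _ _ _) (ih _ _)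

lemma reachSetNAux_le_one (S : Set Q) (sA : Strat Q A) (sB : Strat Q B) :
    ∀ (n : ℕ) (h : List Q) (q : Q), reachSetNAux δ dist S n sA sB h q ≤ 1 := by
  intro n
  induction n with
  | zero =>
      intro h q
      simp only [reachSetNAux]
      split <;> norm_num
  | succ n ih =>
      intro h q
      simp only [reachSetNAux]
      split
      · norm_num
      · calc ∑ q', step δ dist (sA h q) (sB h q) q q' * reachSetNAux δ dist S n sA sB (h ++ [q]) q'
            ≤ ∑ q', step δ dist (sA h q) (sB h q) q q' * 1 := Finset.sum_le_sum fun q' _ =>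
              mul_le_mul_of_nonneg_left (ih _ _) (step_nonneg δ dist _ _ _ _)
          _ = 1 := by simp_rw [mul_one]; exact sum_step_one δ dist _ _ _

lemma reachN_nonneg (sA : Strat Q A) (sB : Strat Q B) (n : ℕ) (q : Q) :
    0 ≤ reachN δ dist T n sA sB q :=
  reachSetNAux_nonneg δ dist _ sA sB n [] q

lemma reachN_le_one (sA : Strat Q A) (sB : Strat Q B) (n : ℕ) (q : Q) :
    reachN δ dist T n sA sB q ≤ 1 :=
  reachSetNAux_le_one δ dist _ sA sB n [] q

lemma bddAbove_reachN (sA : Strat Q A) (sB : Strat Q B) (q : Q) :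
    BddAbove (Set.range fun n => reachN δ dist T n sA sB q) := by
  refine ⟨1, ?_⟩
  rintro y ⟨n, rfl⟩
  exact reachN_le_one δ dist T sA sB n q

lemma reachN_le_reach (sA : Strat Q A) (sB : Strat Q B) (n : ℕ) (q : Q) :
    reachN δ dist T n sA sB q ≤ reach δ dist T sA sB q :=
  le_ciSup (bddAbove_reachN δ dist T sA sB q) n

lemma reach_nonneg (sA : Strat Q A) (sB : Strat Q B) (q : Q) :
    0 ≤ reach δ dist T sA sB q :=
  le_trans (reachN_nonneg δ dist T sA sB 0 q) (reachN_le_reach δ dist T sA sB 0 q)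

lemma reach_le_one (sA : Strat Q A) (sB : Strat Q B) (q : Q) :
    reach δ dist T sA sB q ≤ 1 :=
  ciSup_le fun n => reachN_le_one δ dist T sA sB n q

lemma valA_le_reach (sA : Strat Q A) (sB : Strat Q B) (q : Q) :
    valA δ dist T sA q ≤ reach δ dist T sA sB q := by
  refine ciInf_le ⟨0, ?_⟩ sB
  rintro y ⟨sB', rfl⟩
  exact reach_nonneg δ dist T sA sB' q

lemma le_valA (sA : Strat Q A) (q : Q) {c : ℝ}
    (h : ∀ sB : Strat Q B, c ≤ reach δ dist T sA sB q) : c ≤ valA δ dist T sA q :=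
  le_ciInf h

lemma valA_nonneg (sA : Strat Q A) (q : Q) : 0 ≤ valA δ dist T sA q :=
  le_valA δ dist T sA q fun sB => reach_nonneg δ dist T sA sB q

/-- The upper bound: no Player A strategy achieves more than `m`. -/
lemma valA_le_m {m : Q → ℝ} (hm : IsLfpDelta δ dist T m) (sA : Strat Q A) (q : Q) :
    valA δ dist T sA q ≤ m q := by
  classical
  have hm0 : ∀ q, 0 ≤ m q := fun q => (hm.1 q).1
  have hm1 : ∀ q, m q ≤ 1 := fun q => (hm.1 q).2
  have hex : ∀ (h : List Q) (q' : Q),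
      ∃ b, outB (locPay δ dist m q') (sA h q') b ≤ valGF (locPay δ dist m q') := by
    intro h q'
    exact exists_outB_le_valGF (locPay_nonneg δ dist hm0 q')
      (locPay_le_one δ dist hm1 q') (sA h q')
  choose bf hbf using hex
  set sB : Strat Q B := fun h q' => dirac (bf h q') with hsB
  have key : ∀ (n : ℕ) (h : List Q) (q' : Q),
      reachSetNAux δ dist {T} n sA sB h q' ≤ m q' := by
    intro n
    induction n with
    | zero =>
        intro h q'
        simp only [reachSetNAux]
        split
        · next hq =>
            have : q' = T := hq
            rw [this, m_T_eq_one δ dist T hm]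
        · exact hm0 q'
    | succ n ih =>
        intro h q'
        simp only [reachSetNAux]
        split
        · next hq =>
            have : q' = T := hq
            rw [this, m_T_eq_one δ dist T hm]
        · next hq =>
            have hq' : q' ≠ T := hq
            calc ∑ q'', step δ dist (sA h q') (sB h q') q' q''
                  * reachSetNAux δ dist {T} n sA sB (h ++ [q']) q''
                ≤ ∑ q'', step δ dist (sA h q') (sB h q') q' q'' * m q'' :=
                  Finset.sum_le_sum fun q'' _ =>
                    mul_le_mul_of_nonneg_left (ih _ _) (step_nonneg δ dist _ _ _ _)
              _ = outB (locPay δ dist m q') (sA h q') (bf h q') := by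
                  rw [hsB]
                  exact sum_step_dirac δ dist (sA h q') (bf h q') q' m
              _ ≤ valGF (locPay δ dist m q') := hbf h q'
              _ = m q' := m_fix δ dist T hm hq'
  have h1 : reach δ dist T sA sB q ≤ m q := ciSup_le fun n => key n [] q
  exact le_trans (valA_le_reach δ dist T sA sB q) h1

lemma value_le_m {m : Q → ℝ} (hm : IsLfpDelta δ dist T m) (q : Q) :
    value δ dist T q ≤ m q :=
  ciSup_le fun sA => valA_le_m δ dist T hm sA q

/-- Expected value of `v` after `n` steps (absorbing at the target with value 1). -/
def Vexp (v : Q → ℝ) (sA : Q → FDist A) (sB : Strat Q B) : ℕ → List Q → Q → ℝ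
  | 0, _, q => v q
  | n+1, h, q => if q = T then 1
      else ∑ q', step δ dist (sA q) (sB h q) q q' * Vexp v sA sB n (h ++ [q]) q'

/-- Probability of being, after `n` steps, in a non-target state with positive `v`,
the target being absorbing. -/
def Mmid (v : Q → ℝ) (sA : Q → FDist A) (sB : Strat Q B) : ℕ → List Q → Q → ℝ
  | 0, _, q => if q ≠ T ∧ 0 < v q then 1 else 0
  | n+1, h, q => if q = T then 0
      else ∑ q', step δ dist (sA q) (sB h q) q q' * Mmid v sA sB n (h ++ [q]) q'

variable {v : Q → ℝ} {sA : Q → FDist A} {sB : Strat Q B}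

lemma Mmid_nonneg : ∀ (n : ℕ) (h : List Q) (q : Q), 0 ≤ Mmid δ dist T v sA sB n h q := by
  intro n
  induction n with
  | zero =>
      intro h q; simp only [Mmid]; split <;> norm_num
  | succ n ih =>
      intro h q; simp only [Mmid]; split
      · norm_num
      · exact Finset.sum_nonneg fun q' _ =>
          mul_nonneg (step_nonneg δ dist _ _ _ _) (ih _ _)

lemma Vexp_le_one (hv1 : ∀ q, v q ≤ 1) :
    ∀ (n : ℕ) (h : List Q) (q : Q), Vexp δ dist T v sA sB n h q ≤ 1 := by
  intro n
  induction n with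
  | zero => intro h q; simp only [Vexp]; exact hv1 q
  | succ n ih =>
      intro h q; simp only [Vexp]; split
      · norm_num
      · calc ∑ q', step δ dist (sA q) (sB h q) q q' * Vexp δ dist T v sA sB n (h ++ [q]) q'
            ≤ ∑ q', step δ dist (sA q) (sB h q) q q' * 1 := Finset.sum_le_sum fun q' _ =>
              mul_le_mul_of_nonneg_left (ih _ _) (step_nonneg δ dist _ _ _ _)
          _ = 1 := by simp_rw [mul_one]; exact sum_step_one δ dist _ _ _

lemma Vexp_step (hv0 : ∀ q, 0 ≤ v q) (hv1 : ∀ q, v q ≤ 1) {η : ℝ} (hη : 0 < η)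
    (hdrift : ∀ q, q ≠ T → 0 < v q → ∀ b : B, v q + η ≤ outB (locPay δ dist v q) (sA q) b) :
    ∀ (n : ℕ) (h : List Q) (q : Q),
      Vexp δ dist T v sA sB n h q + η * Mmid δ dist T v sA sB n h q
        ≤ Vexp δ dist T v sA sB (n+1) h q := by
  intro n
  induction n with
  | zero =>
      intro h q
      by_cases hq : q = T
      · have h1 : Vexp δ dist T v sA sB 1 h q = 1 := by simp only [Vexp, if_pos hq]
        have h2 : Mmid δ dist T v sA sB 0 h q = 0 := by
          simp only [Mmid]
          rw [if_neg]
          simp [hq]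
        have h3 : Vexp δ dist T v sA sB 0 h q = v q := rfl
        rw [h1, h2, h3, mul_zero, add_zero]
        exact hv1 q
      · have h1 : Vexp δ dist T v sA sB 1 h q
            = ∑ q', step δ dist (sA q) (sB h q) q q' * v q' := by
          simp only [Vexp, if_neg hq]
        rw [h1]
        rw [sum_step_mul δ dist (sA q) (sB h q) q v]
        by_cases hv : 0 < v q
        · have h2 : Mmid δ dist T v sA sB 0 h q = 1 := by
            simp only [Mmid]; rw [if_pos ⟨hq, hv⟩]
          have h3 : Vexp δ dist T v sA sB 0 h q = v q := rfl
          rw [h2, h3, mul_one]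
          calc v q + η = ∑ b, (sB h q).1 b * (v q + η) := by
                rw [← Finset.sum_mul, (sB h q).2.2, one_mul]
            _ ≤ ∑ b, (sB h q).1 b * outB (locPay δ dist v q) (sA q) b :=
                Finset.sum_le_sum fun b _ =>
                  mul_le_mul_of_nonneg_left (hdrift q hq hv b) ((sB h q).2.1 b)
        · have h2 : Mmid δ dist T v sA sB 0 h q = 0 := by
            simp only [Mmid]; rw [if_neg]; tauto
          have h3 : Vexp δ dist T v sA sB 0 h q = v q := rfl
          have h4 : v q = 0 := le_antisymm (not_lt.mp hv) (hv0 q)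
          rw [h2, h3, h4, mul_zero, add_zero]
          refine Finset.sum_nonneg fun b _ => mul_nonneg ((sB h q).2.1 b) ?_
          exact outB_nonneg (locPay_nonneg δ dist hv0 q) (sA q) b
  | succ n ih =>
      intro h q
      by_cases hq : q = T
      · have h1 : Vexp δ dist T v sA sB (n+2) h q = 1 := by simp only [Vexp, if_pos hq]
        have h2 : Vexp δ dist T v sA sB (n+1) h q = 1 := by simp only [Vexp, if_pos hq]
        have h3 : Mmid δ dist T v sA sB (n+1) h q = 0 := by simp only [Mmid, if_pos hq]
        rw [h1, h2, h3, mul_zero, add_zero]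
      · have h1 : Vexp δ dist T v sA sB (n+2) h q
            = ∑ q', step δ dist (sA q) (sB h q) q q'
                * Vexp δ dist T v sA sB (n+1) (h ++ [q]) q' := by
          simp only [Vexp, if_neg hq]
        have h2 : Vexp δ dist T v sA sB (n+1) h q
            = ∑ q', step δ dist (sA q) (sB h q) q q'
                * Vexp δ dist T v sA sB n (h ++ [q]) q' := by
          simp only [Vexp, if_neg hq]
        have h3 : Mmid δ dist T v sA sB (n+1) h q
            = ∑ q', step δ dist (sA q) (sB h q) q q'
                * Mmid δ dist T v sA sB n (h ++ [q]) q' := by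
          simp only [Mmid, if_neg hq]
        rw [h1, h2, h3, Finset.mul_sum, ← Finset.sum_add_distrib]
        refine Finset.sum_le_sum fun q' _ => ?_
        have h4 := ih (h ++ [q]) q'
        have h5 := step_nonneg δ dist (sA q) (sB h q) q q'
        nlinarith

lemma Vexp_le_reach_add (hv1 : ∀ q, v q ≤ 1) :
    ∀ (n : ℕ) (h : List Q) (q : Q),
      Vexp δ dist T v sA sB n h q
        ≤ reachSetNAux δ dist {T} n (ofPos sA) sB h q + Mmid δ dist T v sA sB n h q := by
  intro n
  induction n with
  | zero =>
      intro h q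
      by_cases hq : q = T
      · have h1 : reachSetNAux δ dist {T} 0 (ofPos sA) sB h q = 1 := by
          simp only [reachSetNAux]
          rw [if_pos (by exact hq)]
        rw [h1]
        have h2 := Mmid_nonneg δ dist T (v := v) (sA := sA) (sB := sB) 0 h q
        have h3 : Vexp δ dist T v sA sB 0 h q = v q := rfl
        rw [h3]
        linarith [hv1 q]
      · have h1 : reachSetNAux δ dist {T} 0 (ofPos sA) sB h q = 0 := by
          simp only [reachSetNAux]
          rw [if_neg (by exact hq)]
        rw [h1, zero_add]
        by_cases hv : 0 < v q
        · have h2 : Mmid δ dist T v sA sB 0 h q = 1 := by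
            simp only [Mmid]; rw [if_pos ⟨hq, hv⟩]
          rw [h2]
          exact hv1 q
        · have h2 : Mmid δ dist T v sA sB 0 h q = 0 := by
            simp only [Mmid]; rw [if_neg]; tauto
          rw [h2]
          exact not_lt.mp hv
  | succ n ih =>
      intro h q
      by_cases hq : q = T
      · have h1 : reachSetNAux δ dist {T} (n+1) (ofPos sA) sB h q = 1 := by
          simp only [reachSetNAux]
          rw [if_pos (by exact hq)]
        have h2 : Vexp δ dist T v sA sB (n+1) h q = 1 := by simp only [Vexp, if_pos hq]
        have h3 := Mmid_nonneg δ dist T (v := v) (sA := sA) (sB := sB) (n+1) h q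
        rw [h1, h2]
        linarith
      · have h1 : reachSetNAux δ dist {T} (n+1) (ofPos sA) sB h q
            = ∑ q', step δ dist (sA q) (sB h q) q q'
                * reachSetNAux δ dist {T} n (ofPos sA) sB (h ++ [q]) q' := by
          simp only [reachSetNAux]
          rw [if_neg (by exact hq)]
          rfl
        have h2 : Vexp δ dist T v sA sB (n+1) h q
            = ∑ q', step δ dist (sA q) (sB h q) q q'
                * Vexp δ dist T v sA sB n (h ++ [q]) q' := by
          simp only [Vexp, if_neg hq]
        have h3 : Mmid δ dist T v sA sB (n+1) h q
            = ∑ q', step δ dist (sA q) (sB h q) q q'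
                * Mmid δ dist T v sA sB n (h ++ [q]) q' := by
          simp only [Mmid, if_neg hq]
        rw [h1, h2, h3, ← Finset.sum_add_distrib]
        refine Finset.sum_le_sum fun q' _ => ?_
        have h4 := ih (h ++ [q]) q'
        have h5 := step_nonneg δ dist (sA q) (sB h q) q q'
        nlinarith

lemma Vexp_telescope (hv0 : ∀ q, 0 ≤ v q) (hv1 : ∀ q, v q ≤ 1) {η : ℝ} (hη : 0 < η)
    (hdrift : ∀ q, q ≠ T → 0 < v q → ∀ b : B, v q + η ≤ outB (locPay δ dist v q) (sA q) b) :
    ∀ (n : ℕ) (h : List Q) (q : Q),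
      v q + η * (∑ k ∈ Finset.range n, Mmid δ dist T v sA sB k h q)
        ≤ Vexp δ dist T v sA sB n h q := by
  intro n
  induction n with
  | zero => intro h q; simp only [Finset.range_zero, Finset.sum_empty, mul_zero, add_zero]; rfl
  | succ n ih =>
      intro h q
      have h1 := Vexp_step δ dist T (sB := sB) hv0 hv1 hη hdrift n h q
      have h2 := ih h q
      rw [Finset.sum_range_succ, mul_add]
      linarith

/-- The core submartingale argument: a positional strategy with uniform strict local
drift on `{v > 0}` guarantees reaching the target with probability at least `v`. -/
lemma drift_lemma (v : Q → ℝ) (sA : Q → FDist A)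
    (hv0 : ∀ q, 0 ≤ v q) (hv1 : ∀ q, v q ≤ 1) {η : ℝ} (hη : 0 < η)
    (hdrift : ∀ q, q ≠ T → 0 < v q → ∀ b : B, v q + η ≤ outB (locPay δ dist v q) (sA q) b) :
    ∀ (sB : Strat Q B) (q : Q), v q ≤ reach δ dist T (ofPos sA) sB q := by
  intro sB q
  refine le_of_forall_pos_le_add ?_
  intro ζ hζ
  obtain ⟨n, hn⟩ := exists_nat_gt (1 / (η * ζ))
  have hn0 : 0 < (n:ℝ) := lt_trans (by positivity) hn
  have hcn : 1 / (η * (n:ℝ)) < ζ := by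
    rw [div_lt_iff₀ (by positivity)]
    rw [div_lt_iff₀ (by positivity)] at hn
    nlinarith
  have hex : ∃ k < n, Mmid δ dist T v sA sB k [] q ≤ 1 / (η * n) := by
    by_contra hcon
    push_neg at hcon
    have hlt : ∀ k ∈ Finset.range n, 1 / (η * (n:ℝ)) < Mmid δ dist T v sA sB k [] q := by
      intro k hk
      exact hcon k (Finset.mem_range.mp hk)
    have hne : (Finset.range n).Nonempty := by
      rw [Finset.nonempty_range_iff]
      intro h0
      rw [h0] at hn0
      norm_num at hn0
    have hsum : ∑ k ∈ Finset.range n, (1 / (η * (n:ℝ)))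
        < ∑ k ∈ Finset.range n, Mmid δ dist T v sA sB k [] q :=
      Finset.sum_lt_sum_of_nonempty hne hlt
    rw [Finset.sum_const, Finset.card_range, nsmul_eq_mul] at hsum
    have hval : (n:ℝ) * (1 / (η * n)) = 1/η := by
      field_simp
    rw [hval] at hsum
    have htel := Vexp_telescope δ dist T (sB := sB) hv0 hv1 hη hdrift n [] q
    have hb1 := Vexp_le_one δ dist T (sA := sA) (sB := sB) hv1 n [] q
    have hv0q := hv0 q
    have h8 := mul_lt_mul_of_pos_left hsum hη
    have h9 : η * (1/η) = 1 := by field_simp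
    linarith
  obtain ⟨k, hk, hMk⟩ := hex
  have h1 := Vexp_le_reach_add δ dist T (sA := sA) (sB := sB) hv1 k [] q
  have h2 : v q ≤ Vexp δ dist T v sA sB k [] q := by
    have := Vexp_telescope δ dist T (sB := sB) hv0 hv1 hη hdrift k [] q
    have hMs : 0 ≤ ∑ j ∈ Finset.range k, Mmid δ dist T v sA sB j [] q :=
      Finset.sum_nonneg fun j _ => Mmid_nonneg δ dist T j [] q
    nlinarith
  have h3 : reachSetNAux δ dist {T} k (ofPos sA) sB [] q
      ≤ reach δ dist T (ofPos sA) sB q :=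
    reachN_le_reach δ dist T (ofPos sA) sB k q
  have : v q ≤ reach δ dist T (ofPos sA) sB q + 1/(η * n) := by linarith
  linarith

end Aux3

end CRG


namespace CRG

section Aux4
set_option linter.unusedSectionVars false

variable {A B Q D : Type} [Fintype A] [Fintype B] [Fintype Q] [Fintype D]
variable [Nonempty A] [Nonempty B] [Nonempty Q] [Nonempty D] [DecidableEq Q]
variable (δ : Q → A → B → D) (dist : D → FDist Q) (m : Q → ℝ) (T : Q)

lemma natS_mono {S S' : Set Q} (h : S ⊆ S') : natS dist S ⊆ natS dist S' := by
  rintro d ⟨q, hq, hne⟩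
  exact ⟨q, h hq, hne⟩

lemma Eff_mono {Gd Gd' Bd Bd' : Set Q} (hG : Gd ⊆ Gd') (hB : Bd' ⊆ Bd) (q : Q) :
    Eff δ dist m q Gd Bd ⊆ Eff δ dist m q Gd' Bd' := by
  rintro σ ⟨⟨hopt, hprog⟩, hnr⟩
  refine ⟨⟨hopt, fun b hb => ?_⟩, fun hr => hnr ?_⟩
  · obtain ⟨a, ha, hd⟩ := hprog b hb
    exact ⟨a, ha, natS_mono dist hG hd⟩
  · obtain ⟨_, b, hb, a, ha, hd⟩ := hr
    exact ⟨hopt, b, hb, a, ha, natS_mono dist hB hd⟩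

lemma SecN_anti {Bd Bd' : Set Q} (h : Bd ⊆ Bd') :
    ∀ n, SecN δ dist m T Bd' n ⊆ SecN δ dist m T Bd n := by
  intro n
  induction n with
  | zero => exact subset_rfl
  | succ n ih =>
      rintro q hq
      rcases hq with hq | ⟨hq1, σ, hσ⟩
      · exact Or.inl (ih hq)
      · exact Or.inr ⟨fun hc => hq1 (h hc), σ, Eff_mono δ dist m ih (fun x hx => h hx) q hσ⟩

lemma Sec_anti {Bd Bd' : Set Q} (h : Bd ⊆ Bd') :
    Sec δ dist m T Bd' ⊆ Sec δ dist m T Bd := by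
  rintro q (hq | hq)
  · rw [Set.mem_iUnion] at hq
    obtain ⟨n, hn⟩ := hq
    exact Or.inl (Set.mem_iUnion.mpr ⟨n, SecN_anti δ dist m T h n hn⟩)
  · exact Or.inr hq

lemma BadN_mono : ∀ n, BadN δ dist m T n ⊆ BadN δ dist m T (n+1) := by
  intro n
  induction n with
  | zero => intro q hq; exact absurd hq (Set.notMem_empty q)
  | succ n ih =>
      show (Sec δ dist m T (BadN δ dist m T n))ᶜ ⊆ (Sec δ dist m T (BadN δ dist m T (n+1)))ᶜ
      exact Set.compl_subset_compl.mpr (Sec_anti δ dist m T ih)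

lemma T_mem_SecN (Bd : Set Q) (n : ℕ) : T ∈ SecN δ dist m T Bd n := by
  induction n with
  | zero => exact rfl
  | succ n ih => exact Or.inl ih

lemma T_mem_Sec (Bd : Set Q) : T ∈ Sec δ dist m T Bd :=
  Or.inl (Set.mem_iUnion.mpr ⟨0, T_mem_SecN δ dist m T Bd 0⟩)

lemma T_not_mem_BadN (n : ℕ) : T ∉ BadN δ dist m T n := by
  cases n with
  | zero => exact Set.notMem_empty T
  | succ n => exact fun hc => hc (T_mem_Sec δ dist m T _)

lemma BadN_stab_from {j : ℕ} (hj : BadN δ dist m T j = BadN δ dist m T (j+1)) :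
    ∀ n, j ≤ n → BadN δ dist m T n = BadN δ dist m T j := by
  intro n hn
  induction n with
  | zero => rw [Nat.le_zero.mp hn]
  | succ n ih =>
      rcases Nat.lt_or_ge j (n+1) with hlt | hge
      · have hjn : j ≤ n := Nat.lt_succ_iff.mp hlt
        have h1 : BadN δ dist m T n = BadN δ dist m T j := ih hjn
        show (Sec δ dist m T (BadN δ dist m T n))ᶜ = BadN δ dist m T j
        rw [h1]
        exact hj.symm
      · exact (le_antisymm hn hge) ▸ rfl

lemma Bad_compl : CRG.Bad δ dist m T = (Sec δ dist m T (CRG.Bad δ dist m T))ᶜ := by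
  set K := Fintype.card Q with hK
  have hstab : ∃ j, j ≤ K ∧ BadN δ dist m T j = BadN δ dist m T (j+1) := by
    by_contra hcon
    push_neg at hcon
    have hcard : ∀ j, j ≤ K + 1 → j ≤ (BadN δ dist m T j).ncard := by
      intro j
      induction j with
      | zero => intro _; exact Nat.zero_le _
      | succ j ih =>
          intro hj
          have hjK : j ≤ K := Nat.lt_succ_iff.mp hj
          have hne := hcon j hjK
          have hss : BadN δ dist m T j ⊂ BadN δ dist m T (j+1) :=
            (BadN_mono δ dist m T j).ssubset_of_ne hne
          have := Set.ncard_lt_ncard hss (Set.toFinite _)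
          have := ih (le_trans hjK (Nat.le_succ K))
          omega
    have h1 := hcard (K+1) (le_refl _)
    have h2 : (BadN δ dist m T (K+1)).ncard ≤ K := by
      have := Set.ncard_le_ncard (Set.subset_univ (BadN δ dist m T (K+1)))
        (Set.toFinite _)
      rwa [Set.ncard_univ, Nat.card_eq_fintype_card] at this
    omega
  obtain ⟨j, hjK, hj⟩ := hstab
  have h1 : BadN δ dist m T K = BadN δ dist m T j :=
    BadN_stab_from δ dist m T hj K hjK
  have h2 : BadN δ dist m T (K+1) = BadN δ dist m T j :=
    BadN_stab_from δ dist m T hj (K+1) (le_trans hjK (Nat.le_succ K))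
  show BadN δ dist m T K = (Sec δ dist m T (BadN δ dist m T K))ᶜ
  calc BadN δ dist m T K = BadN δ dist m T (K+1) := by rw [h1, h2]
    _ = (Sec δ dist m T (BadN δ dist m T K))ᶜ := rfl

lemma not_mem_Bad_of_mem_Sec {q : Q}
    (hq : q ∈ Sec δ dist m T (CRG.Bad δ dist m T)) : q ∉ CRG.Bad δ dist m T := by
  rw [Bad_compl δ dist m T]
  exact fun hc => hc hq

lemma mem_Sec_of_not_mem_Bad {q : Q}
    (hq : q ∉ CRG.Bad δ dist m T) : q ∈ Sec δ dist m T (CRG.Bad δ dist m T) := by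
  rw [Bad_compl δ dist m T] at hq
  exact not_not.mp hq

/-- the minimal `SecN`-level of a state. -/
def rankOf (Bd : Set Q) (q : Q) : ℕ :=
  if h : ∃ n, q ∈ SecN δ dist m T Bd n then Nat.find h else 0

lemma rank_spec {Bd : Set Q} {q : Q} (h : ∃ n, q ∈ SecN δ dist m T Bd n) :
    q ∈ SecN δ dist m T Bd (rankOf δ dist m T Bd q) := by
  rw [rankOf, dif_pos h]
  exact Nat.find_spec h

lemma rank_min {Bd : Set Q} {q : Q} (h : ∃ n, q ∈ SecN δ dist m T Bd n)
    {k : ℕ} (hk : k < rankOf δ dist m T Bd q) : q ∉ SecN δ dist m T Bd k := by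
  rw [rankOf, dif_pos h] at hk
  exact Nat.find_min h hk

lemma rank_le {Bd : Set Q} {q : Q} {n : ℕ} (h : q ∈ SecN δ dist m T Bd n) :
    rankOf δ dist m T Bd q ≤ n := by
  rw [rankOf, dif_pos ⟨n, h⟩]
  exact Nat.find_le h

lemma SecN_zero_eq {Bd : Set Q} {q : Q} (h : q ∈ SecN δ dist m T Bd 0) : q = T := h

lemma rank_pos {Bd : Set Q} {q : Q} (h : ∃ n, q ∈ SecN δ dist m T Bd n) (hqT : q ≠ T) :
    1 ≤ rankOf δ dist m T Bd q := by
  by_contra hc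
  push_neg at hc
  have h0 : rankOf δ dist m T Bd q = 0 := by omega
  have := rank_spec δ dist m T h
  rw [h0] at this
  exact hqT (SecN_zero_eq δ dist m T this)

lemma eff_at_rank {Bd : Set Q} {q : Q} (h : ∃ n, q ∈ SecN δ dist m T Bd n)
    (hqT : q ≠ T) :
    q ∉ Bd ∧
      (Eff δ dist m q (SecN δ dist m T Bd (rankOf δ dist m T Bd q - 1)) Bd).Nonempty := by
  have hpos := rank_pos δ dist m T h hqT
  set r := rankOf δ dist m T Bd q with hr
  have hspec := rank_spec δ dist m T h
  have hrr : r = (r - 1) + 1 := by omega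
  rw [← hr] at hspec
  rw [hrr] at hspec
  rcases hspec with hq | ⟨h1, h2⟩
  · exfalso
    exact rank_min δ dist m T h (by omega) hq
  · exact ⟨h1, h2⟩

end Aux4

end CRG


namespace CRG

section Aux5
set_option linter.unusedSectionVars false

variable {A B Q D : Type} [Fintype A] [Fintype B] [Fintype Q] [Fintype D]
variable [Nonempty A] [Nonempty B] [Nonempty Q] [Nonempty D] [DecidableEq Q]
variable (δ : Q → A → B → D) (dist : D → FDist Q) (T : Q)

lemma outB_sub_const (u : A → B → ℝ) (c : ℝ) (σA : FDist A) (b : B) :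
    outB (fun a b => u a b - c) σA b = outB u σA b - c := by
  unfold outB
  simp_rw [mul_sub]
  rw [Finset.sum_sub_distrib, ← Finset.sum_mul, σA.2.2, one_mul]

/-- The Everett-style potential and positional strategy with uniform strict drift. -/
lemma everett {m : Q → ℝ} (hm : IsLfpDelta δ dist T m) {ε2 : ℝ} (hε2 : 0 < ε2) :
    ∃ (u : Q → ℝ) (κ : ℝ) (σE : Q → FDist A), 0 < κ ∧ (∀ q, 0 ≤ u q) ∧
      (∀ q, u q ≤ m q) ∧ (∀ q, m q - ε2 ≤ u q) ∧
      (∀ q, 0 < u q → q ≠ T →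
        ∀ b, u q + κ ≤ outB (locPay δ dist u q) (σE q) b) := by
  classical
  obtain ⟨N, hN1, hNv⟩ := exists_vseq_ge δ dist T hm (ε := ε2/2) (by linarith)
  set κ' : ℝ := ε2 / (2 * N) with hκ'
  have hκ'0 : 0 < κ' := by
    rw [hκ']
    have : (0:ℝ) < (N:ℝ) := by exact_mod_cast Nat.lt_of_lt_of_le Nat.zero_lt_one hN1
    positivity
  have hrne : (Finset.range (N+1)).Nonempty :=
    Finset.nonempty_range_iff.mpr (Nat.succ_ne_zero N)
  set u : Q → ℝ := fun q => (Finset.range (N+1)).sup' hrne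
    (fun n => vseq δ dist T n q - n * κ') with hu
  have hu_le : ∀ n ≤ N, ∀ q, vseq δ dist T n q - n * κ' ≤ u q := by
    intro n hn q
    exact Finset.le_sup' (fun k => vseq δ dist T k q - k * κ') (Finset.mem_range.mpr (by omega))
  have hu0 : ∀ q, 0 ≤ u q := by
    intro q
    have h0 := hu_le 0 (Nat.zero_le N) q
    simp only [Nat.cast_zero, zero_mul, sub_zero] at h0
    exact le_trans (vseq_mem_Icc δ dist T 0 q).1 h0
  have hu_ub : ∀ q, u q ≤ m q := by
    intro q
    refine Finset.sup'_le _ _ fun n hn => ?_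
    have h1 := vseq_le_m δ dist T hm n q
    have h2 : 0 ≤ (n:ℝ) * κ' := by positivity
    linarith
  have hu_ge : ∀ q, m q - ε2 ≤ u q := by
    intro q
    have h1 := hu_le N (le_refl N) q
    have h2 := hNv q
    have h3 : (N:ℝ) * κ' = ε2 / 2 := by
      rw [hκ']
      have hN0 : (N:ℝ) ≠ 0 := by
        have : (0:ℝ) < (N:ℝ) := by exact_mod_cast Nat.lt_of_lt_of_le Nat.zero_lt_one hN1
        linarith
      field_simp
    rw [h3] at h1
    linarith
  have hE : ∀ q, 0 < u q → q ≠ T →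
      ∃ σ : FDist A, ∀ b, u q + κ'/2 ≤ outB (locPay δ dist u q) σ b := by
    intro q hq hqT
    obtain ⟨n, hnmem, hneq⟩ := Finset.exists_mem_eq_sup' hrne
      (fun n => vseq δ dist T n q - n * κ')
    have hnN : n ≤ N := Nat.lt_succ_iff.mp (Finset.mem_range.mp hnmem)
    have hueq : u q = vseq δ dist T n q - n * κ' := hneq
    have hn1 : 1 ≤ n := by
      by_contra hc
      push_neg at hc
      have hn0 : n = 0 := by omega
      rw [hn0] at hueq
      simp only [Nat.cast_zero, zero_mul, sub_zero] at hueq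
      have : vseq δ dist T 0 q = 0 := by
        simp [vseq, hqT]
      rw [this] at hueq
      linarith
    -- near-optimal strategy for the (n-1)-st iterate
    have hex : valGF (locPay δ dist (vseq δ dist T (n-1)) q) - κ'/2
        < ⨆ σA : FDist A, valStratGF (locPay δ dist (vseq δ dist T (n-1)) q) σA := by
      show _ < valGF _
      linarith
    obtain ⟨σ, hσ⟩ := exists_lt_of_lt_ciSup hex
    refine ⟨σ, fun b => ?_⟩
    have h1 : ∀ q', vseq δ dist T (n-1) q' - (↑(n-1)) * κ' ≤ u q' :=
      fun q' => hu_le (n-1) (by omega) q'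
    have h2 : outB (locPay δ dist (fun q' => vseq δ dist T (n-1) q' - (↑(n-1)) * κ') q) σ b
        ≤ outB (locPay δ dist u q) σ b := by
      refine outB_mono (fun a b => ?_) σ b
      show lift dist _ _ ≤ lift dist u _
      exact lift_mono h1 _
    have h3 : outB (locPay δ dist (fun q' => vseq δ dist T (n-1) q' - (↑(n-1)) * κ') q) σ b
        = outB (locPay δ dist (vseq δ dist T (n-1)) q) σ b - (↑(n-1)) * κ' := by
      have hlp : ∀ a b', locPay δ dist
          (fun q' => vseq δ dist T (n-1) q' - (↑(n-1)) * κ') q a b'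
          = locPay δ dist (vseq δ dist T (n-1)) q a b' - (↑(n-1)) * κ' := by
        intro a b'
        exact lift_sub_const _ _ _
      calc outB (locPay δ dist (fun q' => vseq δ dist T (n-1) q' - (↑(n-1)) * κ') q) σ b
          = outB (fun a b' => locPay δ dist (vseq δ dist T (n-1)) q a b' - (↑(n-1)) * κ') σ b := by
            unfold outB
            exact Finset.sum_congr rfl fun a _ => by rw [hlp a b]
        _ = outB (locPay δ dist (vseq δ dist T (n-1)) q) σ b - (↑(n-1)) * κ' :=
            outB_sub_const _ _ σ b
    have h4 : valStratGF (locPay δ dist (vseq δ dist T (n-1)) q) σ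
        ≤ outB (locPay δ dist (vseq δ dist T (n-1)) q) σ b :=
      valStratGF_le_outB
        (locPay_nonneg δ dist (fun q' => (vseq_mem_Icc δ dist T (n-1) q').1) q) σ b
    have h5 : valGF (locPay δ dist (vseq δ dist T (n-1)) q) = vseq δ dist T n q := by
      have hn' : n - 1 + 1 = n := by omega
      have : vseq δ dist T (n-1+1) q = Δop δ dist T (vseq δ dist T (n-1)) q := rfl
      rw [hn'] at this
      rw [this]
      unfold Δop
      rw [if_neg hqT]
      rfl
    rw [h5] at hσ
    have hcast : ((n:ℝ) - 1) = (↑(n-1):ℝ) := by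
      have h := Nat.cast_sub (R := ℝ) hn1
      simp at h
      linarith
    -- combine
    have : vseq δ dist T n q - κ'/2 - (↑(n-1)) * κ' ≤ outB (locPay δ dist u q) σ b := by
      calc vseq δ dist T n q - κ'/2 - (↑(n-1)) * κ'
          ≤ outB (locPay δ dist (vseq δ dist T (n-1)) q) σ b - (↑(n-1)) * κ' := by
            linarith
        _ = outB (locPay δ dist (fun q' => vseq δ dist T (n-1) q' - (↑(n-1)) * κ') q) σ b := h3.symm
        _ ≤ outB (locPay δ dist u q) σ b := h2
    have harith : u q + κ'/2 = vseq δ dist T n q - κ'/2 - (↑(n-1)) * κ' := by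
      rw [hueq, ← hcast]
      ring
    linarith
  -- package
  refine ⟨u, κ'/2, fun q => if h : 0 < u q ∧ q ≠ T then (hE q h.1 h.2).choose
    else unif A, by linarith, hu0, hu_ub, hu_ge, ?_⟩
  intro q hq hqT b
  have hcond : 0 < u q ∧ q ≠ T := ⟨hq, hqT⟩
  simp only [dif_pos hcond]
  exact (hE q hcond.1 hcond.2).choose_spec b

end Aux5

end CRG


namespace CRG

section Aux6
set_option linter.unusedSectionVars false

variable {A B Q D : Type} [Fintype A] [Fintype B] [Fintype Q] [Fintype D]
variable [Nonempty A] [Nonempty B] [Nonempty Q] [Nonempty D] [DecidableEq Q]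
variable (δ : Q → A → B → D) (dist : D → FDist Q) (T : Q)

set_option maxHeartbeats 2000000 in
lemma master {m : Q → ℝ} (hm : IsLfpDelta δ dist T m) {ε : ℝ} (hε : 0 < ε) :
    ∃ sA : Q → FDist A,
      (∀ q ∈ Sec δ dist m T (CRG.Bad δ dist m T), valA δ dist T (ofPos sA) q = m q) ∧
      (∀ q ∈ CRG.Bad δ dist m T, m q - ε ≤ valA δ dist T (ofPos sA) q) := by
  classical
  set Bd := CRG.Bad δ dist m T with hBdDef
  have hm0 : ∀ q, 0 ≤ m q := fun q => (hm.1 q).1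
  have hm1 : ∀ q, m q ≤ 1 := fun q => (hm.1 q).2
  set cond : Q → Prop := fun q => (∃ n, q ∈ SecN δ dist m T Bd n) ∧ q ≠ T with hcondDef
  set rk : Q → ℕ := fun q => rankOf δ dist m T Bd q with hrkDef
  have hEffEx : ∀ q, cond q → ∃ σ : FDist A,
      σ ∈ Eff δ dist m q (SecN δ dist m T Bd (rk q - 1)) Bd := by
    intro q hq
    exact (eff_at_rank δ dist m T hq.1 hq.2).2
  set σS : Q → FDist A :=
    fun q => if h : cond q then (hEffEx q h).choose else unif A with hσSDef
  have hσSEff : ∀ q, (h : cond q) →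
      σS q ∈ Eff δ dist m q (SecN δ dist m T Bd (rk q - 1)) Bd := by
    intro q h
    simp only [hσSDef, dif_pos h]
    exact (hEffEx q h).choose_spec
  have hopt : ∀ q, (h : cond q) → σS q ∈ OptA (locPay δ dist m q) :=
    fun q h => ((hσSEff q h).1).1
  have hprog : ∀ q, (h : cond q) → ∀ b ∈ optActs (locPay δ dist m q) (σS q),
      ∃ a ∈ supp (σS q), δ q a b ∈ natS dist (SecN δ dist m T Bd (rk q - 1)) :=
    fun q h => ((hσSEff q h).1).2
  have hsafe : ∀ q, (h : cond q) → ∀ b ∈ optActs (locPay δ dist m q) (σS q),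
      ∀ a ∈ supp (σS q), δ q a b ∉ natS dist Bd := by
    intro q h b hb a ha hdd
    exact (hσSEff q h).2 ⟨hopt q h, b, hb, a, ha, hdd⟩
  have hval_eq : ∀ q, (h : cond q) → valStratGF (locPay δ dist m q) (σS q) = m q := by
    intro q h
    have h1 : valStratGF (locPay δ dist m q) (σS q) = valGF (locPay δ dist m q) :=
      hopt q h
    rw [h1, m_fix δ dist T hm h.2]
  -- progress probabilities
  have hPex : ∀ qb : Q × B, ∃ pr : ℝ, 0 < pr ∧ pr ≤ 1 ∧
      (cond qb.1 → qb.2 ∈ optActs (locPay δ dist m qb.1) (σS qb.1) →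
        ∃ q', q' ∈ SecN δ dist m T Bd (rk qb.1 - 1) ∧
          pr ≤ ∑ a, (σS qb.1).1 a * (dist (δ qb.1 a qb.2)).1 q') := by
    rintro ⟨q, b⟩
    by_cases hc : cond q ∧ b ∈ optActs (locPay δ dist m q) (σS q)
    · obtain ⟨a, ha, hdnat⟩ := hprog q hc.1 b hc.2
      obtain ⟨q', hq'S, hq'ne⟩ := hdnat
      have ha0 : 0 < (σS q).1 a := lt_of_le_of_ne ((σS q).2.1 a) (Ne.symm ha)
      have hd0 : 0 < (dist (δ q a b)).1 q' :=
        lt_of_le_of_ne ((dist (δ q a b)).2.1 q') (Ne.symm hq'ne)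
      refine ⟨(σS q).1 a * (dist (δ q a b)).1 q', mul_pos ha0 hd0, ?_, ?_⟩
      · have h1 := FDist.le_one (σS q) a
        have h2 := FDist.le_one (dist (δ q a b)) q'
        nlinarith
      · intro _ _
        refine ⟨q', hq'S, ?_⟩
        refine Finset.single_le_sum (f := fun a' => (σS q).1 a' * (dist (δ q a' b)).1 q')
          (fun a' _ => mul_nonneg ((σS q).2.1 a') ((dist (δ q a' b)).2.1 q'))
          (Finset.mem_univ a)
    · exact ⟨1, one_pos, le_refl 1, fun h1 h2 => absurd ⟨h1, h2⟩ hc⟩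
  choose prf hprf using hPex
  set p : ℝ := Finset.univ.inf' Finset.univ_nonempty prf with hpDef
  have hp0 : 0 < p := (Finset.lt_inf'_iff _).mpr fun qb _ => (hprf qb).1
  have hp1 : p ≤ 1 := by
    have h1 := Finset.inf'_le prf (Finset.mem_univ (Classical.arbitrary (Q × B)))
    exact le_trans h1 (hprf _).2.1
  have hple : ∀ qb, p ≤ prf qb := fun qb => Finset.inf'_le prf (Finset.mem_univ qb)
  -- gaps
  have hGex : ∀ qb : Q × B, ∃ gr : ℝ, 0 < gr ∧
      (cond qb.1 → qb.2 ∉ optActs (locPay δ dist m qb.1) (σS qb.1) →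
        m qb.1 + gr ≤ outB (locPay δ dist m qb.1) (σS qb.1) qb.2) := by
    rintro ⟨q, b⟩
    by_cases hc : cond q ∧ b ∉ optActs (locPay δ dist m q) (σS q)
    · have hge : valStratGF (locPay δ dist m q) (σS q)
          ≤ outB (locPay δ dist m q) (σS q) b :=
        valStratGF_le_outB (locPay_nonneg δ dist hm0 q) (σS q) b
      have hneq : outB (locPay δ dist m q) (σS q) b
          ≠ valStratGF (locPay δ dist m q) (σS q) := fun he => hc.2 he
      have hlt : valStratGF (locPay δ dist m q) (σS q)
          < outB (locPay δ dist m q) (σS q) b := lt_of_le_of_ne hge (Ne.symm hneq)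
      rw [hval_eq q hc.1] at hlt
      exact ⟨outB (locPay δ dist m q) (σS q) b - m q, by linarith,
        fun _ _ => by linarith⟩
    · exact ⟨1, one_pos, fun h1 h2 => absurd ⟨h1, h2⟩ hc⟩
  choose grf hgrf using hGex
  set g : ℝ := Finset.univ.inf' Finset.univ_nonempty grf with hgDef
  have hg0 : 0 < g := (Finset.lt_inf'_iff _).mpr fun qb _ => (hgrf qb).1
  have hgle : ∀ qb, g ≤ grf qb := fun qb => Finset.inf'_le grf (Finset.mem_univ qb)
  -- geometric constants
  set β : ℝ := p / 2 with hβDef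
  have hβ0 : 0 < β := by rw [hβDef]; linarith
  have hβhalf : 2 * β ≤ 1 := by rw [hβDef]; linarith
  have hβ1 : β ≤ 1 := by linarith
  set R₀ : ℕ := Finset.univ.sup rk with hR₀Def
  have hrkle : ∀ q, rk q ≤ R₀ := fun q => Finset.le_sup (Finset.mem_univ q)
  set dd : ℝ := β ^ R₀ with hddDef
  have hdd0 : 0 < dd := pow_pos hβ0 R₀
  -- Everett part
  set ε2 : ℝ := min (ε/2) (g/4) with hε2Def
  have hε20 : 0 < ε2 := lt_min (by linarith) (by linarith)
  have hε2ε : ε2 ≤ ε/2 := min_le_left _ _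
  have hε2g : ε2 ≤ g/4 := min_le_right _ _
  obtain ⟨u, κ, σE, hκ0, hu0, hu_ub, hu_ge, huE⟩ := everett δ dist T hm hε20
  -- combined strategy
  set sAf : Q → FDist A := fun q => if h : cond q then σS q else σE q with hsAfDef
  have hsAfS : ∀ q, cond q → sAf q = σS q := by
    intro q h; simp only [hsAfDef, dif_pos h]
  have hsAfE : ∀ q, ¬ cond q → sAf q = σE q := by
    intro q h; simp only [hsAfDef, dif_neg h]
  -- the cost function
  set cQ : Q → ℝ := fun q => if (∃ n, q ∈ SecN δ dist m T Bd n)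
    then 1 - β ^ (rk q) else 0 with hcQDef
  have hc0 : ∀ q, 0 ≤ cQ q := by
    intro q
    simp only [hcQDef]
    split
    · have := pow_le_one₀ (le_of_lt hβ0) hβ1 (n := rk q); linarith
    · exact le_refl 0
  have hc1 : ∀ q, cQ q ≤ 1 := by
    intro q
    simp only [hcQDef]
    split
    · have := pow_nonneg (le_of_lt hβ0) (rk q); linarith
    · norm_num
  -- potential family
  have hVal : ∀ θ : ℝ, 0 < θ → θ ≤ ε2 → ∀ q,
      (if q ∈ Bd then max 0 (u q - θ) else max 0 (m q - θ * cQ q))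
        ≤ valA δ dist T (ofPos sAf) q := by
    intro θ hθ0 hθε
    set w : Q → ℝ := fun q => if q ∈ Bd then max 0 (u q - θ)
      else max 0 (m q - θ * cQ q) with hwDef
    have hw0 : ∀ q, 0 ≤ w q := by
      intro q; simp only [hwDef]; split <;> exact le_max_left _ _
    have hw_le_m : ∀ q, w q ≤ m q := by
      intro q; simp only [hwDef]; split
      · exact max_le (hm0 q) (by linarith [hu_ub q])
      · refine max_le (hm0 q) ?_
        have := hc0 q; nlinarith
    have hw1 : ∀ q, w q ≤ 1 := fun q => le_trans (hw_le_m q) (hm1 q)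
    have hw_ge_u : ∀ q, u q - θ ≤ w q := by
      intro q; simp only [hwDef]; split
      · exact le_max_right _ _
      · refine le_trans ?_ (le_max_right _ _)
        have h1 := hu_ub q; have h2 := hc1 q; have h3 := hc0 q; nlinarith
    have hw_ge_mc : ∀ q, q ∉ Bd → m q - θ * cQ q ≤ w q := by
      intro q hq; simp only [hwDef, if_neg hq]; exact le_max_right _ _
    have hw_glob : ∀ q, m q - θ - ε2 ≤ w q := by
      intro q; simp only [hwDef]; split
      · have := hu_ge q
        refine le_trans ?_ (le_max_right _ _); linarith
      · refine le_trans ?_ (le_max_right _ _)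
        have := hc1 q; have := hc0 q; nlinarith
    set η : ℝ := min (θ * dd) (min (g/2) κ) with hηDef
    have hη0 : 0 < η := lt_min (by positivity) (lt_min (by linarith) hκ0)
    have hηκ : η ≤ κ := le_trans (min_le_right _ _) (min_le_right _ _)
    have hηg : η ≤ g/2 := le_trans (min_le_right _ _) (min_le_left _ _)
    have hηθ : η ≤ θ * dd := min_le_left _ _
    have hdrift : ∀ q, q ≠ T → 0 < w q →
        ∀ b, w q + η ≤ outB (locPay δ dist w q) (sAf q) b := by
      intro q hqT hwq b
      by_cases hqc : cond q
      · -- SecN state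
        have hsafS : sAf q = σS q := hsAfS q hqc
        have hqnB : q ∉ Bd := (eff_at_rank δ dist m T hqc.1 hqc.2).1
        have hwq_eq : w q = m q - θ * cQ q := by
          simp only [hwDef, if_neg hqnB] at hwq ⊢
          have h2 : 0 < m q - θ * cQ q := by
            by_contra hc2
            push_neg at hc2
            rw [max_eq_left hc2] at hwq
            exact lt_irrefl 0 hwq
          rw [max_eq_right (le_of_lt h2)]
        set P : Q → ℝ := fun q' => ∑ a, (σS q).1 a * (dist (δ q a b)).1 q' with hPDef
        have hPrw : ∀ f : Q → ℝ,
            outB (locPay δ dist f q) (σS q) b = ∑ q', P q' * f q' :=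
          fun f => outB_locPay_eq_sum δ dist (σS q) q b f
        have hP0 : ∀ q', 0 ≤ P q' := fun q' => Finset.sum_nonneg fun a _ =>
          mul_nonneg ((σS q).2.1 a) ((dist (δ q a b)).2.1 q')
        have hPsum : ∑ q', P q' = 1 := by
          have h1 := hPrw (fun _ => 1)
          rw [outB_locPay_one] at h1
          simp_rw [mul_one] at h1
          exact h1.symm
        rw [hsafS, hPrw w]
        by_cases hbopt : b ∈ optActs (locPay δ dist m q) (σS q)
        · -- optimal action for B
          have houtm : ∑ q', P q' * m q' = m q := by
            rw [← hPrw m]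
            have h1 : outB (locPay δ dist m q) (σS q) b
                = valStratGF (locPay δ dist m q) (σS q) := hbopt
            rw [h1, hval_eq q hqc]
          have hPBad : ∀ q' ∈ Bd, P q' = 0 := by
            intro q' hq'
            refine Finset.sum_eq_zero fun a _ => ?_
            by_cases ha : (σS q).1 a = 0
            · rw [ha, zero_mul]
            · have hnot := hsafe q hqc b hbopt a ha
              have hz : (dist (δ q a b)).1 q' = 0 := by
                by_contra hc3
                exact hnot ⟨q', hq', hc3⟩
              rw [hz, mul_zero]
          obtain ⟨q', hq'S, hq'P⟩ := (hprf (q, b)).2.2 hqc hbopt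
          have hq'ex : ∃ n, q' ∈ SecN δ dist m T Bd n := ⟨rk q - 1, hq'S⟩
          have hrkq' : rk q' ≤ rk q - 1 := rank_le δ dist m T hq'S
          have hrk1 : 1 ≤ rk q := rank_pos δ dist m T hqc.1 hqc.2
          have hcq' : cQ q' ≤ 1 - β ^ (rk q - 1) := by
            simp only [hcQDef, if_pos hq'ex]
            have := pow_le_pow_of_le_one (le_of_lt hβ0) hβ1 hrkq'
            linarith
          have hPq' : p ≤ P q' := le_trans (hple (q, b)) hq'P
          have hcCb : ∀ x, cQ x ≤ 1 - β ^ R₀ := by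
            intro x
            simp only [hcQDef]
            split
            · have := pow_le_pow_of_le_one (le_of_lt hβ0) hβ1 (hrkle x)
              linarith
            · have := pow_le_one₀ (le_of_lt hβ0) hβ1 (n := R₀); linarith
          -- the c-sum estimate
          have hsplit : P q' * cQ q' + ∑ x ∈ Finset.univ.erase q', P x * cQ x
              = ∑ x, P x * cQ x :=
            Finset.add_sum_erase Finset.univ (fun x => P x * cQ x) (Finset.mem_univ q')
          have hsplitP : P q' + ∑ x ∈ Finset.univ.erase q', P x = 1 := by
            rw [Finset.add_sum_erase Finset.univ P (Finset.mem_univ q')]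
            exact hPsum
          have herase0 : 0 ≤ ∑ x ∈ Finset.univ.erase q', P x :=
            Finset.sum_nonneg fun x _ => hP0 x
          have herasebound : ∑ x ∈ Finset.univ.erase q', P x * cQ x
              ≤ (1 - β ^ R₀) * ∑ x ∈ Finset.univ.erase q', P x := by
            rw [Finset.mul_sum]
            refine Finset.sum_le_sum fun x _ => ?_
            have h1 := hcCb x; have h2 := hP0 x; nlinarith
          have hx : β ^ (rk q) = β ^ (rk q - 1) * β := by
            have hrr : rk q = (rk q - 1) + 1 := by omega
            calc β ^ (rk q) = β ^ ((rk q - 1) + 1) := by rw [← hrr]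
              _ = β ^ (rk q - 1) * β := pow_succ β (rk q - 1)
          have hzy' : β ^ R₀ ≤ β ^ (rk q - 1) :=
            pow_le_pow_of_le_one (le_of_lt hβ0) hβ1 (by have := hrkle q; omega)
          have hx0 : 0 ≤ β ^ (rk q - 1) := pow_nonneg (le_of_lt hβ0) _
          have hp2 : p = 2 * β := by rw [hβDef]; ring
          have h5 : p * β ^ (rk q - 1) = 2 * β ^ (rk q) := by
            rw [hp2, hx]; ring
          have h6 : p * β ^ R₀ ≤ β ^ R₀ :=
            mul_le_of_le_one_left (le_of_lt hdd0) hp1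
          have h4 : p * (β ^ (rk q - 1) - β ^ R₀) ≤ P q' * (β ^ (rk q - 1) - β ^ R₀) :=
            mul_le_mul_of_nonneg_right hPq' (by linarith)
          have h1t : P q' * cQ q' ≤ P q' * (1 - β ^ (rk q - 1)) :=
            mul_le_mul_of_nonneg_left hcq' (hP0 q')
          have hzy : β ^ R₀ ≤ β ^ (rk q) :=
            pow_le_pow_of_le_one (le_of_lt hβ0) hβ1 (hrkle q)
          have hcsum : ∑ x, P x * cQ x ≤ (1 - β ^ rk q) - dd := by
            rw [hddDef]
            have hE : ∑ x ∈ Finset.univ.erase q', P x = 1 - P q' := by linarith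
            have step1 : ∑ x, P x * cQ x
                ≤ P q' * (1 - β ^ (rk q - 1)) + (1 - β ^ R₀) * (1 - P q') := by
              rw [← hsplit, ← hE]
              exact add_le_add h1t herasebound
            have step2 : P q' * (1 - β ^ (rk q - 1)) + (1 - β ^ R₀) * (1 - P q')
                = 1 - β ^ R₀ - P q' * (β ^ (rk q - 1) - β ^ R₀) := by ring
            have step3 : p * (β ^ (rk q - 1) - β ^ R₀)
                = p * β ^ (rk q - 1) - p * β ^ R₀ := by ring
            have step4 : P q' * (β ^ (rk q - 1) - β ^ R₀)
                ≥ 2 * β ^ (rk q) - p * β ^ R₀ := by linarith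
            linarith
          -- conclude
          have hterm : ∀ x, P x * (m x - θ * cQ x) ≤ P x * w x := by
            intro x
            by_cases hxB : x ∈ Bd
            · rw [hPBad x hxB]; simp
            · have h1 := hw_ge_mc x hxB; have h2 := hP0 x; nlinarith
          have hsum1 : ∑ x, P x * (m x - θ * cQ x)
              = (∑ x, P x * m x) - θ * (∑ x, P x * cQ x) := by
            rw [Finset.mul_sum, ← Finset.sum_sub_distrib]
            exact Finset.sum_congr rfl fun x _ => by ring
          have hcqq : cQ q = 1 - β ^ rk q := by
            simp only [hcQDef, if_pos hqc.1]
          have hfin1 : ∑ x, P x * (m x - θ * cQ x) ≤ ∑ x, P x * w x :=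
            Finset.sum_le_sum fun x _ => hterm x
          rw [hwq_eq, hcqq]
          have hmul : θ * (∑ x, P x * cQ x) ≤ θ * ((1 - β ^ rk q) - dd) :=
            mul_le_mul_of_nonneg_left hcsum (le_of_lt hθ0)
          have hexp : θ * ((1 - β ^ rk q) - dd) = θ * (1 - β ^ rk q) - θ * dd := by
            ring
          rw [hsum1] at hfin1
          rw [houtm] at hfin1
          linarith
        · -- suboptimal action for B
          have hgap := (hgrf (q, b)).2 hqc hbopt
          have hg2 : m q + g ≤ ∑ x, P x * m x := by
            rw [← hPrw m]
            have := hgle (q, b)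
            linarith
          have hterm : ∀ x, P x * (m x - (θ + ε2)) ≤ P x * w x := by
            intro x
            have h1 := hw_glob x; have h2 := hP0 x; nlinarith
          have hsum2 : ∑ x, P x * (m x - (θ + ε2))
              = (∑ x, P x * m x) - (θ + ε2) := by
            simp_rw [mul_sub]
            rw [Finset.sum_sub_distrib, ← Finset.sum_mul, hPsum, one_mul]
          have hfin1 : ∑ x, P x * (m x - (θ + ε2)) ≤ ∑ x, P x * w x :=
            Finset.sum_le_sum fun x _ => hterm x
          rw [hsum2] at hfin1
          have hwm := hw_le_m q
          have hθg : θ ≤ g/4 := le_trans hθε hε2g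
          linarith
      · -- not a SecN state
        have hnotsec : ¬ ∃ n, q ∈ SecN δ dist m T Bd n := fun hex => hqc ⟨hex, hqT⟩
        by_cases hqB : q ∈ Bd
        · -- Everett case
          have h2 : 0 < u q - θ := by
            simp only [hwDef, if_pos hqB] at hwq
            by_contra hc2
            push_neg at hc2
            rw [max_eq_left hc2] at hwq
            exact lt_irrefl 0 hwq
          have hwEq : w q = u q - θ := by
            simp only [hwDef, if_pos hqB]
            rw [max_eq_right (le_of_lt h2)]
          have huq : 0 < u q := by linarith
          have hEdrift := huE q huq hqT b
          have hsafE : sAf q = σE q := hsAfE q hqc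
          have hstep1 : outB (locPay δ dist (fun q' => u q' - θ) q) (σE q) b
              = outB (locPay δ dist u q) (σE q) b - θ := by
            calc outB (locPay δ dist (fun q' => u q' - θ) q) (σE q) b
                = outB (fun a b' => locPay δ dist u q a b' - θ) (σE q) b := by
                  unfold outB
                  refine Finset.sum_congr rfl fun a _ => ?_
                  rw [show locPay δ dist (fun q' => u q' - θ) q a b
                      = locPay δ dist u q a b - θ from lift_sub_const _ _ _]
              _ = outB (locPay δ dist u q) (σE q) b - θ := outB_sub_const _ _ _ _
          have hstep2 : outB (locPay δ dist (fun q' => u q' - θ) q) (σE q) b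
              ≤ outB (locPay δ dist w q) (σE q) b := by
            refine outB_mono (fun a b' => ?_) (σE q) b
            show lift dist _ _ ≤ lift dist w _
            exact lift_mono hw_ge_u _
          rw [hsafE]
          calc w q + η ≤ (u q - θ) + κ := by rw [hwEq]; linarith
            _ ≤ outB (locPay δ dist u q) (σE q) b - θ := by linarith
            _ = outB (locPay δ dist (fun q' => u q' - θ) q) (σE q) b := hstep1.symm
            _ ≤ outB (locPay δ dist w q) (σE q) b := hstep2
        · -- m q = 0: contradiction with w q > 0
          exfalso
          have hqSec : q ∈ Sec δ dist m T Bd := mem_Sec_of_not_mem_Bad δ dist m T hqB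
          have hm0q : m q = 0 := by
            rcases hqSec with hq1 | hq2
            · exact absurd (Set.mem_iUnion.mp hq1) hnotsec
            · exact hq2
          have hwz : w q = 0 := by
            simp only [hwDef, if_neg hqB, hm0q]
            rw [max_eq_left]
            have := hc0 q
            nlinarith
          rw [hwz] at hwq
          exact lt_irrefl 0 hwq
    have hreach := drift_lemma δ dist T w sAf hw0 hw1 hη0 hdrift
    intro q
    have : w q ≤ valA δ dist T (ofPos sAf) q :=
      le_valA δ dist T (ofPos sAf) q fun sB => hreach sB q
    simpa only [hwDef] using this
  -- conclude
  refine ⟨sAf, ?_, ?_⟩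
  · intro q hqSec
    have hub := valA_le_m δ dist T hm (ofPos sAf) q
    refine le_antisymm hub ?_
    by_cases hqU : ∃ n, q ∈ SecN δ dist m T Bd n
    · by_contra hcon
      push_neg at hcon
      set θ : ℝ := min ε2 ((m q - valA δ dist T (ofPos sAf) q)/2) with hθDef
      have hθ0 : 0 < θ := lt_min hε20 (by linarith)
      have h1 := hVal θ hθ0 (min_le_left _ _) q
      have hqnB : q ∉ Bd := not_mem_Bad_of_mem_Sec δ dist m T hqSec
      rw [if_neg hqnB] at h1
      have h2 : m q - θ ≤ max 0 (m q - θ * cQ q) := by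
        have h3 := hc0 q; have h4 := hc1 q
        refine le_trans ?_ (le_max_right _ _)
        nlinarith
      have h3 : θ ≤ (m q - valA δ dist T (ofPos sAf) q)/2 := min_le_right _ _
      linarith
    · have hm0q : m q = 0 := by
        rcases hqSec with h | h
        · exact absurd (Set.mem_iUnion.mp h) hqU
        · exact h
      rw [hm0q]
      exact valA_nonneg δ dist T (ofPos sAf) q
  · intro q hqB
    have h1 := hVal ε2 hε20 (le_refl ε2) q
    rw [if_pos hqB] at h1
    have h2 : u q - ε2 ≤ max 0 (u q - ε2) := le_max_right _ _
    have h3 := hu_ge q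
    linarith

end Aux6

end CRG

/-- for every ε > 0 there is a positional Player A strategy optimal from
the states of `Sec(Bad)` and ε-optimal from the states of `Bad`; in particular
`Sec(Bad) ⊆ MaxQ_A`. -/
theorem stmt6
    {A B Q D : Type} [Fintype A] [Fintype B] [Fintype Q] [Fintype D]
    [Nonempty A] [Nonempty B] [Nonempty Q] [Nonempty D] [DecidableEq Q]
    (δ : Q → A → B → D) (dist : D → FDist Q) (T : Q)
    (habs : CRG.Absorbing δ dist T)
    (m : Q → ℝ) (hm : CRG.IsLfpDelta δ dist T m) :
    (∀ ε : ℝ, 0 < ε →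
      ∃ sA : Q → FDist A,
        (∀ q ∈ CRG.Sec δ dist m T (CRG.Bad δ dist m T),
          CRG.valA δ dist T (CRG.ofPos sA) q = m q) ∧
        (∀ q ∈ CRG.Bad δ dist m T,
          m q - ε ≤ CRG.valA δ dist T (CRG.ofPos sA) q)) ∧
    ∀ q ∈ CRG.Sec δ dist m T (CRG.Bad δ dist m T), CRG.Maximizable δ dist T q := by
  classical
  constructor
  · intro ε hε
    exact CRG.master δ dist T hm hε
  · intro q hq
    obtain ⟨sA, h1, _⟩ := CRG.master δ dist T hm (ε := 1) one_pos
    refine ⟨CRG.ofPos sA, ?_⟩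
    have hv : CRG.valA δ dist T (CRG.ofPos sA) q = m q := h1 q hq
    have hub : CRG.value δ dist T q ≤ m q := CRG.value_le_m δ dist T hm q
    have hlb : m q ≤ CRG.value δ dist T q := by
      rw [← hv]
      show CRG.valA δ dist T (CRG.ofPos sA) q ≤ ⨆ sA' : CRG.Strat Q A, CRG.valA δ dist T sA' q
      refine le_ciSup (f := fun sA' : CRG.Strat Q A => CRG.valA δ dist T sA' q) ⟨m q, ?_⟩ (CRG.ofPos sA)
      rintro y ⟨sA', rfl⟩
      exact CRG.valA_le_m δ dist T hm sA' q
    rw [hv, le_antisymm hub hlb]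
end
end
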